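/- arXiv:math-ph/0402033 — 7 statements merged into one kernel-verified Lean document; each statement's English description precedes it below -/
import Mathlib

section
/- Let n ≥ 1 and let G be an n×n symmetric matrix with complex entries such that every diagonal entry equals 2 and the rank of G is at most 2. Then there exist complex numbers φ_1, …, φ_n such that G_{ij} = 2 cos(φ_i − φ_j) for all i, j. -/
open Matrix Complex

/-- A rank ≤ 1 matrix has all columns multiples of a single vector. -/
lemma rank_le_one_struct {n : ℕ} (M : Matrix (Fin n) (Fin n) ℂ) (h : M.rank ≤ 1) :
    ∃ d α : Fin n → ℂ, ∀ i j, M i j = α j * d i := by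
  rw [Matrix.rank] at h
  obtain ⟨v, hv⟩ := finrank_le_one_iff.mp h
  have key : ∀ j : Fin n, ∃ a : ℂ, ∀ i, M i j = a * v.1 i := by
    intro j
    obtain ⟨a, ha⟩ := hv ⟨M.mulVec (Pi.single j 1), ⟨Pi.single j 1, rfl⟩⟩
    refine ⟨a, fun i => ?_⟩
    have h2 : a • (v.1 : Fin n → ℂ) = M.mulVec (Pi.single j 1) := congrArg Subtype.val ha
    have h3 := congrFun h2 i
    simp only [Pi.smul_apply, smul_eq_mul, Matrix.mulVec_single, mul_one, op_smul_eq_mul,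
      Matrix.col_apply] at h3
    exact h3.symm
  choose α hα using key
  exact ⟨v.1, α, fun i j => hα j i⟩

/-- A symmetric rank ≤ 1 complex matrix is `w wᵀ`. -/
lemma rank_le_one_symm {n : ℕ} (M : Matrix (Fin n) (Fin n) ℂ) (hM : M.IsSymm)
    (h : M.rank ≤ 1) : ∃ w : Fin n → ℂ, ∀ i j, M i j = w i * w j := by
  obtain ⟨d, α, hda⟩ := rank_le_one_struct M h
  by_cases hzero : ∀ i j, M i j = 0
  · exact ⟨0, fun i j => by simp [hzero]⟩
  push_neg at hzero
  obtain ⟨p, q, hpq⟩ := hzero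
  have hsym : ∀ i j, M i j = M j i := fun i j => by
    have := congrFun (congrFun hM j) i; simpa [Matrix.transpose_apply] using this
  have hminor : ∀ i j k l, M i j * M k l = M i l * M k j := by
    intro i j k l; rw [hda, hda, hda, hda]; ring
  have hqq : M q q ≠ 0 := by
    intro h0
    apply hpq
    have := hminor p q q p
    rw [hsym q p] at this
    have h2 : M p q * M p q = 0 := by rw [this, h0]; ring
    exact mul_self_eq_zero.mp h2
  obtain ⟨s, hs⟩ := IsAlgClosed.exists_pow_nat_eq (M q q) (n := 2) (by norm_num)
  have hsne : s ≠ 0 := by intro h0; rw [h0] at hs; simp at hs; exact hqq hs.symm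
  have hss : s * s ≠ 0 := mul_ne_zero hsne hsne
  refine ⟨fun i => M i q / s, fun i j => ?_⟩
  have hm := hminor i q q j
  rw [hsym q j] at hm
  rw [div_mul_div_comm, eq_comm, div_eq_iff hss]
  rw [show s * s = M q q from by rw [← hs]; ring]
  exact hm

/-- Every `n × n` complex symmetric matrix of rank at most `2` whose
diagonal entries all equal `2` can be written as `G_{ij} = 2 cos (φ_i − φ_j)`. -/
theorem rank_two_gram_param (n : ℕ) (hn : 1 ≤ n) (G : Matrix (Fin n) (Fin n) ℂ)
    (hsymm : G.IsSymm) (hdiag : ∀ i, G i i = 2) (hrank : G.rank ≤ 2) :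
    ∃ φ : Fin n → ℂ, ∀ i j, G i j = 2 * Complex.cos (φ i - φ j) := by
  have i0 : Fin n := ⟨0, hn⟩
  have hsym : ∀ i j, G i j = G j i := fun i j => by
    have := congrFun (congrFun hsymm j) i; simpa [Matrix.transpose_apply] using this
  set c : Fin n → ℂ := fun i => G i i0 with hc
  set M : Matrix (Fin n) (Fin n) ℂ := Matrix.of (fun i j => G i j - 2⁻¹ * c i * c j) with hMdef
  have hMapp : ∀ i j, M i j = G i j - 2⁻¹ * c i * c j := fun i j => rfl
  have hrange : LinearMap.range M.mulVecLin ≤ LinearMap.range G.mulVecLin := by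
    rintro _ ⟨x, rfl⟩
    refine ⟨x - (2⁻¹ * (c ⬝ᵥ x)) • (Pi.single i0 1 : Fin n → ℂ), ?_⟩
    rw [map_sub, LinearMap.map_smul]
    ext i
    simp only [Matrix.mulVecLin_apply, Matrix.mulVec_single, Pi.sub_apply, Pi.smul_apply,
      smul_eq_mul, mul_one, op_smul_eq_mul, Matrix.col_apply]
    rw [Matrix.mulVec, Matrix.mulVec, dotProduct, dotProduct, dotProduct]
    rw [show (∑ j, M i j * x j) = ∑ j, (G i j * x j - 2⁻¹ * G i i0 * (c j * x j)) from
      Finset.sum_congr rfl (fun j _ => by rw [hMapp]; ring)]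
    rw [Finset.sum_sub_distrib, ← Finset.mul_sum]
    ring
  have hMi0 : ∀ j, M i0 j = 0 := by
    intro j
    have hci0 : c i0 = 2 := hdiag i0
    have hcj : c j = G i0 j := hsym j i0
    rw [hMapp, hci0, hcj]; ring
  have hMrow : ∀ x : Fin n → ℂ, M.mulVec x i0 = 0 := by
    intro x
    rw [Matrix.mulVec, dotProduct]
    exact Finset.sum_eq_zero fun j _ => by rw [hMi0 j, zero_mul]
  have hcnot : c ∉ LinearMap.range M.mulVecLin := by
    rintro ⟨x, hx⟩
    have h1 : c i0 = 0 := by rw [← hx, Matrix.mulVecLin_apply]; exact hMrow x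
    have h2 : G i0 i0 = 0 := h1
    rw [hdiag i0] at h2
    norm_num at h2
  have hcin : c ∈ LinearMap.range G.mulVecLin := by
    refine ⟨Pi.single i0 1, ?_⟩
    ext i
    simp [Matrix.mulVecLin_apply, Matrix.mulVec_single, hc]
  have hMrank : M.rank ≤ 1 := by
    have hlt : LinearMap.range M.mulVecLin < LinearMap.range M.mulVecLin ⊔ Submodule.span ℂ {c} := by
      refine lt_of_le_of_ne le_sup_left ?_
      intro heq
      exact hcnot (heq ▸ (le_sup_right : Submodule.span ℂ {c} ≤ _) (Submodule.mem_span_singleton_self c))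
    have h1 : Module.finrank ℂ (LinearMap.range M.mulVecLin) <
        Module.finrank ℂ ↥(LinearMap.range M.mulVecLin ⊔ Submodule.span ℂ {c}) :=
      Submodule.finrank_lt_finrank_of_lt hlt
    have h2 : Module.finrank ℂ ↥(LinearMap.range M.mulVecLin ⊔ Submodule.span ℂ {c}) ≤
        Module.finrank ℂ (LinearMap.range G.mulVecLin) := by
      apply Submodule.finrank_mono
      exact sup_le hrange ((Submodule.span_singleton_le_iff_mem _ _).mpr hcin)
    have : Matrix.rank M < Matrix.rank G := lt_of_lt_of_le h1 h2
    omega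
  have hMsymm : M.IsSymm := by
    ext j i
    simp only [Matrix.transpose_apply, hMapp]
    rw [hsym j i]; ring
  obtain ⟨w, hw⟩ := rank_le_one_symm M hMsymm hMrank
  have hdecomp : ∀ i j, G i j = 2⁻¹ * c i * c j + w i * w j := by
    intro i j
    have := hw i j
    rw [hMapp] at this
    linear_combination this
  obtain ⟨s, hs⟩ := IsAlgClosed.exists_pow_nat_eq ((2 : ℂ)⁻¹) (n := 2) (by norm_num)
  set z : Fin n → ℂ := fun i => s * (s * c i + Complex.I * w i) with hz
  set z' : Fin n → ℂ := fun i => s * (s * c i - Complex.I * w i) with hz'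
  have hzz' : ∀ i, z i * z' i = 1 := by
    intro i
    have h2 : (2 : ℂ)⁻¹ * c i * c i + w i * w i = 2 := by rw [← hdecomp i i, hdiag]
    have h3 : z i * z' i = s^2 * ((s^2) * (c i * c i) - Complex.I^2 * (w i * w i)) := by
      rw [hz, hz']; ring
    rw [h3, Complex.I_sq, hs]
    linear_combination 2⁻¹ * h2
  have hsum : ∀ i j, z i * z' j + z j * z' i = G i j := by
    intro i j
    have h3 : z i * z' j + z j * z' i =
        s^2 * (2 * (s^2) * (c i * c j) - 2 * Complex.I^2 * (w i * w j)) := by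
      rw [hz, hz']; ring
    rw [h3, Complex.I_sq, hs, hdecomp i j]
    ring
  have hzne : ∀ i, z i ≠ 0 := fun i h0 => by
    have := hzz' i; rw [h0, zero_mul] at this; exact one_ne_zero this.symm
  have hinv : ∀ i, z' i = (z i)⁻¹ := fun i =>
    eq_inv_of_mul_eq_one_left (by rw [mul_comm]; exact hzz' i)
  refine ⟨fun i => -Complex.I * Complex.log (z i), fun i j => ?_⟩
  have hcos : ∀ θ : ℂ, Complex.cos θ =
      (Complex.exp (θ * Complex.I) + Complex.exp (-θ * Complex.I)) / 2 := fun θ => rfl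
  rw [hcos]
  have harg : (-Complex.I * Complex.log (z i) - -Complex.I * Complex.log (z j)) * Complex.I
      = Complex.log (z i) - Complex.log (z j) := by
    have h4 : (-Complex.I * Complex.log (z i) - -Complex.I * Complex.log (z j)) * Complex.I
        = -(Complex.I * Complex.I) * (Complex.log (z i) - Complex.log (z j)) := by ring
    rw [h4, Complex.I_mul_I]; ring
  have harg2 : -(-Complex.I * Complex.log (z i) - -Complex.I * Complex.log (z j)) * Complex.I
      = Complex.log (z j) - Complex.log (z i) := by
    have h4 : -(-Complex.I * Complex.log (z i) - -Complex.I * Complex.log (z j)) * Complex.I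
        = -(Complex.I * Complex.I) * (Complex.log (z j) - Complex.log (z i)) := by ring
    rw [h4, Complex.I_mul_I]; ring
  rw [harg, harg2, Complex.exp_sub, Complex.exp_sub,
    Complex.exp_log (hzne i), Complex.exp_log (hzne j)]
  have final : ∀ a b : ℂ, a ≠ 0 → b ≠ 0 → a * b⁻¹ + b * a⁻¹ = 2 * ((a / b + b / a) / 2) := by
    intro a b ha hb
    field_simp
  rw [← hsum i j, hinv i, hinv j]
  exact final (z i) (z j) (hzne i) (hzne j)
end

section
/- Let n ≥ 1 and consider the additive group A = ℂ / πℤ (the quotient of ℂ by the subgroup of integer multiples of π). For 1 ≤ i ≤ n define the automorphism T_i of A^{n+1} by T_i : φ_i ↦ 2φ_i − φ_{i+1}, φ_{i+1} ↦ φ_i, and φ_j ↦ φ_j for j ≠ i, i+1. Then the orbit of a point (φ_1, …, φ_{n+1}) ∈ A^{n+1} under the group generated by T_1, …, T_n is finite if and only if for every i with 1 ≤ i ≤ n, the difference φ_i − φ_{i+1} lies in the image of πℚ in A (i.e., each consecutive difference is a rational multiple of π modulo πℤ). -/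
/-- The additive group `A = ℂ / πℤ`. -/
abbrev Amod : Type := ℂ ⧸ AddSubgroup.zmultiples (Real.pi : ℂ)

/-- Forward action of `T_{i+1}` (0-indexed `i`) on `A^{n+1}`:
`φ_i ↦ 2φ_i − φ_{i+1}`, `φ_{i+1} ↦ φ_i`, fixing the other coordinates. -/
noncomputable def TFun (n : ℕ) (i : Fin n) (f : Fin (n + 1) → Amod) : Fin (n + 1) → Amod := fun j =>
  if j = i.castSucc then 2 • f i.castSucc - f i.succ
  else if j = i.succ then f i.castSucc
  else f j

/-- Inverse of `TFun`. -/
noncomputable def TInvFun (n : ℕ) (i : Fin n) (f : Fin (n + 1) → Amod) : Fin (n + 1) → Amod := fun j =>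
  if j = i.castSucc then f i.succ
  else if j = i.succ then 2 • f i.succ - f i.castSucc
  else f j

theorem TleftInv (n : ℕ) (i : Fin n) (f : Fin (n + 1) → Amod) :
    TInvFun n i (TFun n i f) = f := by
  have hne : i.castSucc ≠ i.succ := (Fin.castSucc_lt_succ : i.castSucc < i.succ).ne
  funext j
  by_cases h1 : j = i.castSucc
  · simp [TFun, TInvFun, h1, if_neg hne, if_neg (Ne.symm hne)]
  · by_cases h2 : j = i.succ
    · simp [TFun, TInvFun, h1, h2, if_neg hne, if_neg (Ne.symm hne)]
    · simp [TFun, TInvFun, h1, h2]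

theorem TrightInv (n : ℕ) (i : Fin n) (f : Fin (n + 1) → Amod) :
    TFun n i (TInvFun n i f) = f := by
  have hne : i.castSucc ≠ i.succ := (Fin.castSucc_lt_succ : i.castSucc < i.succ).ne
  funext j
  by_cases h1 : j = i.castSucc
  · simp [TFun, TInvFun, h1, if_neg hne, if_neg (Ne.symm hne)]
  · by_cases h2 : j = i.succ
    · simp [TFun, TInvFun, h1, h2, if_neg hne, if_neg (Ne.symm hne)]
    · simp [TFun, TInvFun, h1, h2]

/-- `T_{i+1}` as a permutation of `A^{n+1}`. -/
noncomputable def Tequiv (n : ℕ) (i : Fin n) : Equiv.Perm (Fin (n + 1) → Amod) :=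
  ⟨TFun n i, TInvFun n i, TleftInv n i, TrightInv n i⟩

lemma Tpow_apply (n : ℕ) (i : Fin n) (φ : Fin (n+1) → Amod) (k : ℕ) :
    ((Tequiv n i) ^ k) φ = fun j =>
      if j = i.castSucc ∨ j = i.succ then φ j + k • (φ i.castSucc - φ i.succ) else φ j := by
  induction k with
  | zero => simp
  | succ k ih =>
    have hne : i.castSucc ≠ i.succ := (Fin.castSucc_lt_succ : i.castSucc < i.succ).ne
    rw [pow_succ', Equiv.Perm.mul_apply, ih]
    funext j
    show TFun n i (fun j => if j = i.castSucc ∨ j = i.succ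
      then φ j + k • (φ i.castSucc - φ i.succ) else φ j) j = _
    by_cases h1 : j = i.castSucc
    · subst h1
      simp only [TFun, eq_self_iff_true, if_true, true_or, or_true]
      simp only [smul_sub, succ_nsmul]
      abel
    · by_cases h2 : j = i.succ
      · subst h2
        simp only [TFun, if_neg (Ne.symm hne), eq_self_iff_true, if_true, true_or, or_true]
        simp only [smul_sub, succ_nsmul]
        abel
      · simp [TFun, h1, h2]

lemma torsion_rat (x : Amod) (m : ℤ) (hm : m ≠ 0) (h : m • x = 0) :
    ∃ q : ℚ, x = (QuotientAddGroup.mk ((q : ℂ) * (Real.pi : ℂ)) : Amod) := by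
  obtain ⟨c, rfl⟩ := QuotientAddGroup.mk_surjective x
  have h2 : ((m • c : ℂ) : Amod) = 0 := by
    rw [← h]; rfl
  rw [QuotientAddGroup.eq_zero_iff] at h2
  obtain ⟨z, hz⟩ := AddSubgroup.mem_zmultiples_iff.mp h2
  refine ⟨(z : ℚ) / (m : ℚ), ?_⟩
  congr 1
  have hmC : (m : ℂ) ≠ 0 := Int.cast_ne_zero.mpr hm
  have hzc : (z : ℂ) * Real.pi = (m : ℂ) * c := by
    rw [← zsmul_eq_mul, ← zsmul_eq_mul]; exact hz
  push_cast
  rw [div_mul_eq_mul_div, hzc, mul_comm (m : ℂ) c, mul_div_assoc, div_self hmC, mul_one]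

lemma rat_torsion (q : ℚ) (N : ℕ) (hd : (q.den : ℕ) ∣ N) :
    N • (QuotientAddGroup.mk ((q : ℂ) * (Real.pi : ℂ)) : Amod) = 0 := by
  obtain ⟨t, ht⟩ := hd
  have hq : (N : ℚ) * q = (t : ℚ) * (q.num : ℚ) := by
    rw [ht]
    push_cast
    rw [mul_comm (q.den : ℚ) t, mul_assoc]
    congr 1
    rw [mul_comm]
    exact_mod_cast Rat.mul_den_eq_num q
  have hqC : (N : ℂ) * (q : ℂ) = (t : ℂ) * (q.num : ℂ) := by
    have := congrArg (fun r : ℚ => (r : ℂ)) hq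
    push_cast at this
    exact this
  have : ((N • ((q : ℂ) * Real.pi) : ℂ) : Amod) = 0 := by
    rw [QuotientAddGroup.eq_zero_iff]
    refine AddSubgroup.mem_zmultiples_iff.mpr ⟨t * q.num, ?_⟩
    rw [zsmul_eq_mul, nsmul_eq_mul]
    push_cast
    linear_combination -(Real.pi : ℂ) * hqC
  rw [← this]; rfl


/-- The orbit of `(φ_1, …, φ_{n+1}) ∈ A^{n+1}` under the group
generated by `T_1, …, T_n` is finite iff every consecutive difference
`φ_i − φ_{i+1}` is a rational multiple of `π` modulo `πℤ`. -/
theorem finite_orbit_iff_rational (n : ℕ) (hn : 1 ≤ n) (φ : Fin (n + 1) → Amod) :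
    {ψ | ∃ T ∈ Subgroup.closure (Set.range (Tequiv n)), T φ = ψ}.Finite ↔
      ∀ i : Fin n, ∃ q : ℚ,
        φ i.castSucc - φ i.succ =
          (QuotientAddGroup.mk ((q : ℂ) * (Real.pi : ℂ)) : Amod) := by
  constructor
  · intro hfin i
    have hTmem : ∀ k : ℕ, (Tequiv n i) ^ k ∈ Subgroup.closure (Set.range (Tequiv n)) :=
      fun k => pow_mem (Subgroup.subset_closure (Set.mem_range_self i)) k
    have hsub : Set.range (fun k : ℕ => ((Tequiv n i) ^ k) φ) ⊆
        {ψ | ∃ T ∈ Subgroup.closure (Set.range (Tequiv n)), T φ = ψ} := by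
      rintro ψ ⟨k, hk⟩
      exact ⟨_, hTmem k, hk⟩
    have hni : ¬ Function.Injective (fun k : ℕ => ((Tequiv n i) ^ k) φ) := by
      intro hinj
      exact (Set.infinite_range_of_injective hinj) (hfin.subset hsub)
    rw [Function.not_injective_iff] at hni
    obtain ⟨a, b, hab, hne⟩ := hni
    have hab2 : φ i.castSucc + a • (φ i.castSucc - φ i.succ) =
        φ i.castSucc + b • (φ i.castSucc - φ i.succ) := by
      have := congrFun hab i.castSucc
      simpa [Tpow_apply] using this
    have hab3 : a • (φ i.castSucc - φ i.succ) = b • (φ i.castSucc - φ i.succ) :=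
      add_left_cancel hab2
    have hzero : ((a : ℤ) - (b : ℤ)) • (φ i.castSucc - φ i.succ) = 0 := by
      rw [sub_zsmul, natCast_zsmul, natCast_zsmul, hab3]
      simp
    exact torsion_rat _ _ (sub_ne_zero.mpr (by exact_mod_cast hne)) hzero
  · intro hq
    choose q hqs using hq
    obtain ⟨N, hN0, hdvd⟩ : ∃ N : ℕ, N ≠ 0 ∧ ∀ i : Fin n, (q i).den ∣ N :=
      ⟨∏ i, (q i).den, Finset.prod_ne_zero_iff.mpr (fun i _ => (q i).den_pos.ne'),
        fun i => Finset.dvd_prod_of_mem _ (Finset.mem_univ i)⟩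
    haveI : NeZero N := ⟨hN0⟩
    set d : Fin n → Amod := fun i => φ i.castSucc - φ i.succ with hdd
    have hNd : ∀ i, N • d i = 0 := by
      intro i
      show N • (φ i.castSucc - φ i.succ) = 0
      rw [hqs i]
      exact rat_torsion (q i) N (hdvd i)
    have hNd' : ∀ i, zmultiplesHom Amod (d i) ((N : ℤ)) = 0 := by
      intro i
      rw [zmultiplesHom_apply, natCast_zsmul]
      exact hNd i
    let f : Fin n → (ZMod N →+ Amod) := fun i => ZMod.lift N ⟨zmultiplesHom Amod (d i), hNd' i⟩
    let F : (Fin n → ZMod N) →+ Amod :=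
      ∑ i, (f i).comp (Pi.evalAddMonoidHom (fun _ => ZMod N) i)
    set D : AddSubgroup Amod := F.range with hD
    have hdF : ∀ i, d i ∈ D := by
      intro i
      rw [hD, AddMonoidHom.mem_range]
      refine ⟨Pi.single i 1, ?_⟩
      show (∑ j, (f j).comp (Pi.evalAddMonoidHom (fun _ => ZMod N) j)) (Pi.single i 1) = d i
      rw [AddMonoidHom.finset_sum_apply]
      rw [Finset.sum_eq_single i]
      · rw [AddMonoidHom.comp_apply, Pi.evalAddMonoidHom_apply, Pi.single_eq_same]
        rw [show (1 : ZMod N) = ((1 : ℤ) : ZMod N) by push_cast; rfl]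
        show (ZMod.lift N ⟨zmultiplesHom Amod (d i), hNd' i⟩) ((1 : ℤ) : ZMod N) = d i
        rw [ZMod.lift_coe]
        show (1 : ℤ) • d i = d i
        rw [one_zsmul]
      · intro j _ hj
        rw [AddMonoidHom.comp_apply, Pi.evalAddMonoidHom_apply, Pi.single_eq_of_ne hj,
          map_zero]
      · intro h; exact absurd (Finset.mem_univ i) h
    have hDfin : (D : Set Amod).Finite := by
      have : (D : Set Amod) = Set.range F := by
        ext x; simp [hD, AddMonoidHom.mem_range, Set.mem_range]
      rw [this]
      exact Set.finite_range F
    set S : Set (Fin (n + 1) → Amod) := {ψ | ∀ j, ψ j - φ j ∈ D} with hS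
    have hSfin : S.Finite := by
      have hSeq : S = Set.univ.pi (fun j => {x | x - φ j ∈ D}) := by
        ext ψ; simp [hS, Set.mem_pi]
      rw [hSeq]
      refine Set.Finite.pi (fun j => ?_)
      have : {x : Amod | x - φ j ∈ D} = (fun y => y + φ j) '' (D : Set Amod) := by
        ext x
        constructor
        · intro hx; exact ⟨x - φ j, hx, by simp⟩
        · rintro ⟨y, hy, rfl⟩; simpa using hy
      rw [this]
      exact hDfin.image _
    have hφS : φ ∈ S := by
      intro j; simp only [hS, Set.mem_setOf_eq, sub_self]; exact zero_mem D
    have key : ∀ T ∈ Subgroup.closure (Set.range (Tequiv n)),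
        (∀ ψ ∈ S, T ψ ∈ S) ∧ (∀ ψ ∈ S, T⁻¹ ψ ∈ S) := by
      intro T hT
      induction hT using Subgroup.closure_induction with
      | mem x hx =>
        obtain ⟨i, rfl⟩ := hx
        constructor
        · intro ψ hψ j
          show TFun n i ψ j - φ j ∈ D
          by_cases h1 : j = i.castSucc
          · subst h1
            have : TFun n i ψ i.castSucc - φ i.castSucc =
                (ψ i.castSucc - φ i.castSucc) + (ψ i.castSucc - φ i.castSucc)
                  - (ψ i.succ - φ i.succ) + (φ i.castSucc - φ i.succ) := by
              simp only [TFun, if_pos rfl, ↓reduceIte]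
              abel
            rw [this]
            exact add_mem (sub_mem (add_mem (hψ _) (hψ _)) (hψ _)) (hdF i)
          · by_cases h2 : j = i.succ
            · subst h2
              have hne2 : i.succ ≠ i.castSucc := (Fin.castSucc_lt_succ : i.castSucc < i.succ).ne'
              have : TFun n i ψ i.succ - φ i.succ =
                  (ψ i.castSucc - φ i.castSucc) + (φ i.castSucc - φ i.succ) := by
                simp only [TFun, if_neg hne2, if_pos rfl, ↓reduceIte]
                abel
              rw [this]
              exact add_mem (hψ _) (hdF i)
            · have : TFun n i ψ j = ψ j := by simp [TFun, h1, h2]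
              rw [this]
              exact hψ j
        · intro ψ hψ j
          show TInvFun n i ψ j - φ j ∈ D
          by_cases h1 : j = i.castSucc
          · subst h1
            have : TInvFun n i ψ i.castSucc - φ i.castSucc =
                (ψ i.succ - φ i.succ) - (φ i.castSucc - φ i.succ) := by
              simp only [TInvFun, if_pos rfl]
              abel
            rw [this]
            exact sub_mem (hψ _) (hdF i)
          · by_cases h2 : j = i.succ
            · subst h2
              have hne2 : i.succ ≠ i.castSucc := (Fin.castSucc_lt_succ : i.castSucc < i.succ).ne'
              have : TInvFun n i ψ i.succ - φ i.succ =
                  (ψ i.succ - φ i.succ) + (ψ i.succ - φ i.succ)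
                    - (ψ i.castSucc - φ i.castSucc) - (φ i.castSucc - φ i.succ) := by
                simp only [TInvFun, if_neg hne2, if_pos rfl, ↓reduceIte]
                abel
              rw [this]
              exact sub_mem (sub_mem (add_mem (hψ _) (hψ _)) (hψ _)) (hdF i)
            · have : TInvFun n i ψ j = ψ j := by simp [TInvFun, h1, h2]
              rw [this]
              exact hψ j
      | one => exact ⟨fun ψ hψ => by simpa using hψ, fun ψ hψ => by simpa using hψ⟩
      | mul x y hx hy px py =>
        refine ⟨fun ψ hψ => ?_, fun ψ hψ => ?_⟩
        · rw [Equiv.Perm.mul_apply]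
          exact px.1 _ (py.1 _ hψ)
        · rw [mul_inv_rev, Equiv.Perm.mul_apply]
          exact py.2 _ (px.2 _ hψ)
      | inv x hx px => exact ⟨px.2, by simpa using px.1⟩
    refine hSfin.subset ?_
    rintro ψ ⟨T, hT, rfl⟩
    exact (key T hT).1 φ hφS
end

section
/- Let n ≥ 2 be even. Then the alternating bilinear form J on ℤ^n is non-degenerate (the map v ↦ J(v, ·) from ℤ^n to its dual is injective), and J is invariant under 𝒢_n: for every T ∈ 𝒢_n and all v, w ∈ ℤ^n, J(Tv, Tw) = J(v, w). -/
/-- The index `i - 1` as an element of `Fin n`. -/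
def ipred {n : ℕ} (i : Fin n) : Fin n :=
  ⟨(i : ℕ) - 1, lt_of_le_of_lt (Nat.sub_le _ _) i.isLt⟩

/-- Forward action of the generator `S_{i+1}` (0-indexed `i`) on `ℤ^n`:
for `i = 0` it is `k_0 ↦ k_0`, `k_j ↦ k_j + k_0` (`j ≠ 0`); for `i ≥ 1` it is
`k_{i-1} ↦ 2 k_{i-1} - k_i`, `k_i ↦ k_{i-1}`, fixing the other coordinates. -/
def SFun (n : ℕ) (i : Fin n) (v : Fin n → ℤ) : Fin n → ℤ := fun j =>
  if (i : ℕ) = 0 then (if (j : ℕ) = 0 then v j else v j + v i)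
  else
    if j = ipred i then 2 * v j - v i
    else if j = i then v (ipred i) else v j

/-- Inverse of `SFun`. -/
def SInvFun (n : ℕ) (i : Fin n) (w : Fin n → ℤ) : Fin n → ℤ := fun j =>
  if (i : ℕ) = 0 then (if (j : ℕ) = 0 then w j else w j - w i)
  else
    if j = ipred i then w i
    else if j = i then 2 * w i - w (ipred i) else w j

theorem ipred_ne {n : ℕ} (i : Fin n) (h : ¬ (i : ℕ) = 0) : ipred i ≠ i := by
  intro hc
  have := congrArg Fin.val hc
  simp [ipred] at this
  omega

theorem left_inv_S (n : ℕ) (i : Fin n) (v : Fin n → ℤ) : SInvFun n i (SFun n i v) = v := by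
  by_cases h : (i : ℕ) = 0
  · funext j
    have hi0 : (i : ℕ) = 0 → ((i : ℕ) = 0) := id
    by_cases hj : (j : ℕ) = 0
    · simp [SFun, SInvFun, h, hj]
    · have hji : j ≠ i := by intro hc; exact hj (by rw [hc]; exact h)
      simp [SFun, SInvFun, h, hj]
  · have hne := ipred_ne i h
    funext j
    by_cases h1 : j = ipred i
    · simp [SFun, SInvFun, h, h1, if_neg hne, if_neg (Ne.symm hne)]
    · by_cases h2 : j = i
      · simp [SFun, SInvFun, h, h1, h2, if_neg hne, if_neg (Ne.symm hne)]
        try ring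
      · simp [SFun, SInvFun, h, h1, h2]

theorem right_inv_S (n : ℕ) (i : Fin n) (v : Fin n → ℤ) : SFun n i (SInvFun n i v) = v := by
  by_cases h : (i : ℕ) = 0
  · funext j
    by_cases hj : (j : ℕ) = 0
    · simp [SFun, SInvFun, h, hj]
    · simp [SFun, SInvFun, h, hj]
  · have hne := ipred_ne i h
    funext j
    by_cases h1 : j = ipred i
    · simp [SFun, SInvFun, h, h1, if_neg hne, if_neg (Ne.symm hne)]
      try ring
    · by_cases h2 : j = i
      · simp [SFun, SInvFun, h, h1, h2, if_neg hne, if_neg (Ne.symm hne)]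
      · simp [SFun, SInvFun, h, h1, h2]

theorem map_add_S (n : ℕ) (i : Fin n) (v w : Fin n → ℤ) :
    SFun n i (v + w) = SFun n i v + SFun n i w := by
  funext j
  simp only [SFun, Pi.add_apply]
  split_ifs <;> ring

/-- The generator `S_{i+1}` as a `ℤ`-linear automorphism of `ℤ^n`. -/
def Sgen (n : ℕ) (i : Fin n) : (Fin n → ℤ) ≃ₗ[ℤ] (Fin n → ℤ) :=
  AddEquiv.toIntLinearEquiv
    { toFun := SFun n i
      invFun := SInvFun n i
      left_inv := left_inv_S n i
      right_inv := right_inv_S n i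
      map_add' := map_add_S n i }

/-- The group `𝒢_n`: the subgroup of automorphisms of `ℤ^n` generated by `S_1, …, S_n`. -/
def Gn (n : ℕ) : Subgroup ((Fin n → ℤ) ≃ₗ[ℤ] (Fin n → ℤ)) :=
  Subgroup.closure (Set.range (Sgen n))

/-- `x_i(v) = Σ_{j ≤ i} (−1)^{i−j} k_j` (0-indexed). -/
def xcoord {R : Type*} [CommRing R] {n : ℕ} (i : Fin n) (v : Fin n → R) : R :=
  ∑ j : Fin n, if j ≤ i then (-1 : R) ^ ((i : ℕ) - (j : ℕ)) * v j else 0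

/-- The alternating form `J(v,w) = Σ_{i=1}^{n-1} (x_i(v) x_{i+1}(w) − x_{i+1}(v) x_i(w))`. -/
def Jform {R : Type*} [CommRing R] {n : ℕ} (v w : Fin n → R) : R :=
  ∑ i : Fin n, if h : (i : ℕ) + 1 < n then
      xcoord i v * xcoord ⟨(i : ℕ) + 1, h⟩ w - xcoord ⟨(i : ℕ) + 1, h⟩ v * xcoord i w
    else 0

/-- `γ(v)`: the gcd of the coordinates. -/
def gam {n : ℕ} (v : Fin n → ℤ) : ℤ := Finset.univ.gcd v

open Classical in
/-- `α(v)`: the number of coordinates `i` with `k_i / γ(v)` odd. -/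
noncomputable def alph {n : ℕ} (v : Fin n → ℤ) : ℕ :=
  (Finset.univ.filter fun i => Odd (v i / gam v)).card

/-- `δ(v) = |2 α(v) − n − 1|`. -/
noncomputable def delt {n : ℕ} (v : Fin n → ℤ) : ℤ := |2 * (alph v : ℤ) - (n : ℤ) - 1|

/-- For odd `n`, the invariant `x(v) = k_1 − k_2 + ⋯ + k_n`. -/
def xalt {n : ℕ} (v : Fin n → ℤ) : ℤ := ∑ j : Fin n, (-1 : ℤ) ^ (j : ℕ) * v j


namespace JAux

open Finset

variable {n : ℕ}

/-- Coordinates extended to `ℕ` (zero out of range). -/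
def vv (v : Fin n → ℤ) (j : ℕ) : ℤ := if h : j < n then v ⟨j, h⟩ else 0

/-- `x`-coordinates indexed by `ℕ`. -/
def xx (v : Fin n → ℤ) (m : ℕ) : ℤ := ∑ j ∈ Finset.range (m+1), (-1:ℤ)^(m-j) * vv v j

lemma xx_zero (v : Fin n → ℤ) : xx v 0 = vv v 0 := by simp [xx]

lemma xx_succ (v : Fin n → ℤ) (m : ℕ) : xx v (m+1) = vv v (m+1) - xx v m := by
  rw [xx, Finset.sum_range_succ]
  have h : ∀ j ∈ Finset.range (m+1), (-1:ℤ)^(m+1-j) * vv v j = -((-1:ℤ)^(m-j) * vv v j) := by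
    intro j hj
    rw [Finset.mem_range] at hj
    rw [show m + 1 - j = (m - j) + 1 from by omega, pow_succ]
    ring
  rw [Finset.sum_congr rfl h]
  simp [xx]
  ring

lemma vv_coord (v : Fin n → ℤ) (j : Fin n) : vv v (j : ℕ) = v j := by
  rw [vv, dif_pos j.isLt]

lemma xcoord_eq_xx (i : Fin n) (v : Fin n → ℤ) : xcoord i v = xx v (i : ℕ) := by
  rw [xcoord]
  have h1 : ∀ j : Fin n, (if j ≤ i then (-1:ℤ)^((i:ℕ)-(j:ℕ)) * v j else 0)
      = (fun k => if k ≤ (i:ℕ) then (-1:ℤ)^((i:ℕ)-k) * vv v k else 0) (j:ℕ) := by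
    intro j
    simp only [vv_coord]
    by_cases h : j ≤ i
    · rw [if_pos h, if_pos (Fin.le_def.mp h)]
    · rw [if_neg h, if_neg (fun hc => h (Fin.le_def.mpr hc))]
  rw [Finset.sum_congr rfl (fun j _ => h1 j),
    Fin.sum_univ_eq_sum_range (fun k => if k ≤ (i:ℕ) then (-1:ℤ)^((i:ℕ)-k) * vv v k else 0) n,
    xx, ← Finset.sum_subset (Finset.range_subset_range.mpr i.isLt)]
  · apply Finset.sum_congr rfl
    intro j hj
    rw [Finset.mem_range] at hj
    rw [if_pos (by omega)]
  · intro j _ hj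
    rw [Finset.mem_range] at hj
    rw [if_neg (by omega)]

lemma Jform_eq (v w : Fin n → ℤ) :
    Jform v w = ∑ k ∈ Finset.range (n-1),
      (xx v k * xx w (k+1) - xx v (k+1) * xx w k) := by
  have h1 : Jform v w = ∑ k ∈ Finset.range n,
      (fun k => if k + 1 < n then (xx v k * xx w (k+1) - xx v (k+1) * xx w k) else 0) k := by
    rw [Jform, ← Fin.sum_univ_eq_sum_range]
    apply Finset.sum_congr rfl
    intro j _
    by_cases h : (j:ℕ)+1 < n
    · rw [dif_pos h]
      simp only [if_pos h, xcoord_eq_xx]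
    · rw [dif_neg h]
      simp only [if_neg h]
  rw [h1, ← Finset.sum_subset (Finset.range_subset_range.mpr (Nat.sub_le n 1))]
  · apply Finset.sum_congr rfl
    intro j hj
    rw [Finset.mem_range] at hj
    rw [if_pos (by omega)]
  · intro j hj hj2
    rw [Finset.mem_range] at hj hj2
    rw [if_neg (by omega)]

lemma xx_sub (v w : Fin n → ℤ) (m : ℕ) : xx (v - w) m = xx v m - xx w m := by
  rw [xx, xx, xx, ← Finset.sum_sub_distrib]
  apply Finset.sum_congr rfl
  intro j _
  have h : vv (v - w) j = vv v j - vv w j := by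
    rw [vv, vv, vv]; split <;> simp
  rw [h]; ring

lemma Jform_sub_left (v v' w : Fin n → ℤ) :
    Jform (v - v') w = Jform v w - Jform v' w := by
  rw [Jform_eq, Jform_eq, Jform_eq, ← Finset.sum_sub_distrib]
  apply Finset.sum_congr rfl
  intro k _
  rw [xx_sub, xx_sub]
  ring

/-! ### Transformation of `xx` under the generators -/

lemma xx_S0 (i : Fin n) (hi : (i:ℕ) = 0) (v : Fin n → ℤ) :
    ∀ m, m < n → xx (SFun n i v) m = xx v m + (if m % 2 = 1 then v i else 0) := by
  intro m
  induction m with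
  | zero =>
    intro h0
    rw [xx_zero, xx_zero, if_neg (show ¬(0:ℕ) % 2 = 1 from by omega), add_zero,
      vv, vv, dif_pos h0, dif_pos h0]
    simp only [SFun, if_pos hi]
    simp
  | succ m ih =>
    intro hm
    rw [xx_succ, xx_succ, ih (by omega)]
    have hv : vv (SFun n i v) (m+1) = vv v (m+1) + v i := by
      simp only [vv, dif_pos hm, SFun, if_pos hi]
      norm_num
    rw [hv]
    rcases Nat.mod_two_eq_zero_or_one m with h | h
    · rw [h, show (m+1) % 2 = 1 from by omega,
        if_neg (show ¬(0:ℕ) = 1 from by omega), if_pos rfl]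
      ring
    · rw [h, show (m+1) % 2 = 0 from by omega,
        if_pos rfl, if_neg (show ¬(0:ℕ) = 1 from by omega)]
      ring

lemma SFun_apply (i : Fin n) (hi : (i:ℕ) ≠ 0) (v : Fin n → ℤ) (j : Fin n) :
    SFun n i v j = if (j:ℕ) = (i:ℕ) - 1 then 2 * v (ipred i) - v i
      else if (j:ℕ) = (i:ℕ) then v (ipred i) else v j := by
  simp only [SFun, if_neg hi]
  have h1 : (j = ipred i) ↔ ((j:ℕ) = (i:ℕ)-1) := by rw [Fin.ext_iff]; rfl
  have h2 : (j = i) ↔ ((j:ℕ) = (i:ℕ)) := Fin.ext_iff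
  by_cases hj1 : (j:ℕ) = (i:ℕ) - 1
  · rw [if_pos (h1.mpr hj1), if_pos hj1, h1.mpr hj1]
  · rw [if_neg (fun hc => hj1 (h1.mp hc)), if_neg hj1]
    by_cases hj2 : (j:ℕ) = (i:ℕ)
    · rw [if_pos (h2.mpr hj2), if_pos hj2]
    · rw [if_neg (fun hc => hj2 (h2.mp hc)), if_neg hj2]

lemma vv_Sp (i : Fin n) (hi : (i:ℕ) ≠ 0) (v : Fin n → ℤ) (j : ℕ) :
    vv (SFun n i v) j = if j = (i:ℕ) - 1 then 2 * v (ipred i) - v i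
      else if j = (i:ℕ) then v (ipred i) else vv v j := by
  by_cases hj : j < n
  · rw [vv, dif_pos hj, SFun_apply i hi, vv, dif_pos hj]
  · have h1 : j ≠ (i:ℕ)-1 := by have := i.isLt; omega
    have h2 : j ≠ (i:ℕ) := by have := i.isLt; omega
    rw [vv, dif_neg hj, if_neg h1, if_neg h2, vv, dif_neg hj]

lemma vv_ipred (i : Fin n) (v : Fin n → ℤ) : vv v ((i:ℕ) - 1) = v (ipred i) := by
  rw [vv, dif_pos (lt_of_le_of_lt (Nat.sub_le _ _) i.isLt)]
  rfl

lemma xx_Sp (i : Fin n) (hi : (i:ℕ) ≠ 0) (v : Fin n → ℤ) (m : ℕ) :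
    xx (SFun n i v) m = xx v m + (if m = (i:ℕ) - 1 then v (ipred i) - v i else 0) := by
  have hqi : (i:ℕ) - 1 + 1 = (i:ℕ) := by omega
  induction m with
  | zero =>
    rw [xx_zero, xx_zero, vv_Sp i hi]
    by_cases h1 : 0 = (i:ℕ) - 1
    · rw [if_pos h1, if_pos h1,
        show vv v 0 = v (ipred i) from by rw [h1]; exact vv_ipred i v]
      ring
    · rw [if_neg h1, if_neg (by omega : ¬ (0:ℕ) = (i:ℕ)), if_neg h1]
      ring
  | succ m ih =>
    rw [xx_succ, xx_succ, ih, vv_Sp i hi]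
    by_cases h1 : m + 1 = (i:ℕ) - 1
    · rw [if_pos h1, if_pos h1, if_neg (by omega : ¬ m = (i:ℕ) - 1),
        show vv v (m+1) = v (ipred i) from by rw [h1]; exact vv_ipred i v]
      ring
    · by_cases h2 : m + 1 = (i:ℕ)
      · rw [if_neg h1, if_pos h2, if_neg h1, if_pos (by omega : m = (i:ℕ) - 1),
          show vv v (m+1) = v i from by rw [h2]; exact vv_coord v i]
        ring
      · rw [if_neg h1, if_neg h2, if_neg h1, if_neg (by omega : ¬ m = (i:ℕ) - 1)]
        ring

lemma cB0 (i : Fin n) (hi : (i:ℕ) = 1) (v : Fin n → ℤ) :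
    v (ipred i) - v i = -(xx v 1) := by
  have h1 : xx v 1 = vv v 1 - xx v 0 := xx_succ v 0
  rw [xx_zero] at h1
  have h2 : vv v 0 = v (ipred i) := by rw [show (0:ℕ) = (i:ℕ) - 1 from by omega]; exact vv_ipred i v
  have h3 : vv v 1 = v i := by rw [show (1:ℕ) = (i:ℕ) from hi.symm]; exact vv_coord v i
  rw [h2, h3] at h1
  linarith

lemma cB1 (i : Fin n) (hi : 2 ≤ (i:ℕ)) (v : Fin n → ℤ) :
    v (ipred i) - v i = xx v ((i:ℕ) - 2) - xx v (i:ℕ) := by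
  have e1 : (i:ℕ) - 2 + 1 = (i:ℕ) - 1 := by omega
  have e2 : (i:ℕ) - 1 + 1 = (i:ℕ) := by omega
  have h1 : xx v ((i:ℕ)-1) = vv v ((i:ℕ)-1) - xx v ((i:ℕ)-2) := by
    rw [← e1, xx_succ, e1]
  have h2 : xx v ((i:ℕ)) = vv v ((i:ℕ)) - xx v ((i:ℕ)-1) := by
    rw [← e2, xx_succ, e2]
  rw [vv_ipred] at h1
  rw [vv_coord] at h2
  linarith

/-! ### Invariance of `J` under the generators -/

lemma J_inv_gen (hn : 2 ≤ n) (he : Even n) (i : Fin n) (v w : Fin n → ℤ) :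
    Jform (SFun n i v) (SFun n i w) = Jform v w := by
  rw [Jform_eq, Jform_eq]
  by_cases hi : (i:ℕ) = 0
  · -- case of S₁
    have key : ∀ k ∈ Finset.range (n-1),
        (xx (SFun n i v) k * xx (SFun n i w) (k+1)
          - xx (SFun n i v) (k+1) * xx (SFun n i w) k)
        = (xx v k * xx w (k+1) - xx v (k+1) * xx w k)
          + ((if k % 2 = 1 then 0 else w i * xx v k - v i * xx w k)
             - (if (k+1) % 2 = 1 then 0 else w i * xx v (k+1) - v i * xx w (k+1))) := by
      intro k hk
      rw [Finset.mem_range] at hk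
      rw [xx_S0 i hi v k (by omega), xx_S0 i hi w k (by omega),
          xx_S0 i hi v (k+1) (by omega), xx_S0 i hi w (k+1) (by omega)]
      rcases Nat.mod_two_eq_zero_or_one k with h | h
      · rw [h, show (k+1) % 2 = 1 from by omega]
        norm_num
        ring
      · rw [h, show (k+1) % 2 = 0 from by omega]
        norm_num
        ring
    have tele : (∑ k ∈ Finset.range (n-1),
        ((if k % 2 = 1 then (0:ℤ) else w i * xx v k - v i * xx w k)
          - (if (k+1) % 2 = 1 then (0:ℤ) else w i * xx v (k+1) - v i * xx w (k+1))))
        = (if (0:ℕ) % 2 = 1 then (0:ℤ) else w i * xx v 0 - v i * xx w 0)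
          - (if (n-1) % 2 = 1 then (0:ℤ) else w i * xx v (n-1) - v i * xx w (n-1)) :=
      Finset.sum_range_sub' (fun k => if k % 2 = 1 then (0:ℤ) else w i * xx v k - v i * xx w k) (n-1)
    rw [Finset.sum_congr rfl key, Finset.sum_add_distrib, tele]
    have hx0v : xx v 0 = v i := by
      rw [xx_zero, show (0:ℕ) = (i:ℕ) from hi.symm, vv_coord]
    have hx0w : xx w 0 = w i := by
      rw [xx_zero, show (0:ℕ) = (i:ℕ) from hi.symm, vv_coord]
    obtain ⟨r, hr⟩ := he
    rw [if_neg (show ¬ (0:ℕ) % 2 = 1 from by omega),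
      if_pos (show (n-1) % 2 = 1 from by omega), hx0v, hx0w]
    ring
  · -- case of Sᵢ, i ≥ 2
    have hiLt := i.isLt
    have key : ∀ k ∈ Finset.range (n-1),
        (xx (SFun n i v) k * xx (SFun n i w) (k+1)
          - xx (SFun n i v) (k+1) * xx (SFun n i w) k)
        = (xx v k * xx w (k+1) - xx v (k+1) * xx w k)
          + ((if k + 1 = (i:ℕ) - 1 then
                (w (ipred i) - w i) * xx v k - (v (ipred i) - v i) * xx w k else 0)
             + (if k = (i:ℕ) - 1 then
                (v (ipred i) - v i) * xx w (k+1) - (w (ipred i) - w i) * xx v (k+1) else 0)) := by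
      intro k _
      rw [xx_Sp i hi v k, xx_Sp i hi w k, xx_Sp i hi v (k+1), xx_Sp i hi w (k+1)]
      by_cases h1 : k = (i:ℕ) - 1
      · rw [if_pos h1, if_pos h1, if_pos h1,
          if_neg (by omega : ¬ k + 1 = (i:ℕ) - 1),
          if_neg (by omega : ¬ k + 1 = (i:ℕ) - 1),
          if_neg (by omega : ¬ k + 1 = (i:ℕ) - 1)]
        ring
      · by_cases h2 : k + 1 = (i:ℕ) - 1
        · rw [if_neg h1, if_neg h1, if_neg h1, if_pos h2, if_pos h2, if_pos h2]
          ring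
        · rw [if_neg h1, if_neg h1, if_neg h1, if_neg h2, if_neg h2, if_neg h2]
          ring
    rw [Finset.sum_congr rfl key, Finset.sum_add_distrib, Finset.sum_add_distrib]
    have hsum2 : (∑ k ∈ Finset.range (n-1), if k = (i:ℕ) - 1 then
        (v (ipred i) - v i) * xx w (k+1) - (w (ipred i) - w i) * xx v (k+1) else 0)
        = (v (ipred i) - v i) * xx w ((i:ℕ) - 1 + 1) - (w (ipred i) - w i) * xx v ((i:ℕ) - 1 + 1) := by
      rw [Finset.sum_ite_eq' (Finset.range (n-1)) ((i:ℕ)-1)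
        (fun k => (v (ipred i) - v i) * xx w (k+1) - (w (ipred i) - w i) * xx v (k+1)),
        if_pos (Finset.mem_range.mpr (by omega))]
    by_cases hq : (i:ℕ) = 1
    · have hsum1 : (∑ k ∈ Finset.range (n-1), if k + 1 = (i:ℕ) - 1 then
          (w (ipred i) - w i) * xx v k - (v (ipred i) - v i) * xx w k else 0) = 0 := by
        apply Finset.sum_eq_zero
        intro k _
        rw [if_neg (by omega)]
      rw [hsum1, hsum2, cB0 i hq v, cB0 i hq w,
        show (i:ℕ) - 1 + 1 = 1 from by omega]
      ring
    · have h2i : 2 ≤ (i:ℕ) := by omega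
      have hsum1 : (∑ k ∈ Finset.range (n-1), if k + 1 = (i:ℕ) - 1 then
          (w (ipred i) - w i) * xx v k - (v (ipred i) - v i) * xx w k else 0)
          = (w (ipred i) - w i) * xx v ((i:ℕ) - 2) - (v (ipred i) - v i) * xx w ((i:ℕ) - 2) := by
        have hcond : ∀ k : ℕ, (k + 1 = (i:ℕ) - 1) = (k = (i:ℕ) - 2) :=
          fun k => propext (by omega)
        simp only [hcond]
        rw [Finset.sum_ite_eq' (Finset.range (n-1)) ((i:ℕ)-2)
          (fun k => (w (ipred i) - w i) * xx v k - (v (ipred i) - v i) * xx w k),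
          if_pos (Finset.mem_range.mpr (by omega))]
      rw [hsum1, hsum2, cB1 i h2i v, cB1 i h2i w,
        show (i:ℕ) - 1 + 1 = (i:ℕ) from by omega]
      ring

/-! ### Non-degeneracy -/

def yvec (n m : ℕ) : Fin n → ℤ :=
  fun j => (if (j:ℕ) = m then 1 else 0) + (if (j:ℕ) = m + 1 then 1 else 0)

lemma vv_yvec (m j : ℕ) : vv (yvec n m) j
    = if j < n then ((if j = m then (1:ℤ) else 0) + (if j = m+1 then 1 else 0)) else 0 := by
  by_cases h : j < n
  · rw [vv, dif_pos h, if_pos h]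
    rfl
  · rw [vv, dif_neg h, if_neg h]

lemma xx_yvec (m : ℕ) (hm : m < n) :
    ∀ j, j < n → xx (yvec n m) j = if j = m then 1 else 0 := by
  intro j
  induction j with
  | zero =>
    intro h
    rw [xx_zero, vv_yvec, if_pos h, if_neg (by omega : ¬ (0:ℕ) = m + 1)]
    ring
  | succ j ih =>
    intro h
    rw [xx_succ, ih (by omega), vv_yvec, if_pos h]
    by_cases h1 : j + 1 = m
    · rw [if_pos h1, if_neg (by omega : ¬ j + 1 = m + 1), if_neg (by omega : ¬ j = m)]
      ring
    · by_cases h2 : j = m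
      · rw [if_neg h1, if_pos (by omega : j + 1 = m + 1), if_pos h2]
        ring
      · rw [if_neg h1, if_neg (by omega : ¬ j + 1 = m + 1), if_neg h2]
        ring

lemma J_yvec (u : Fin n → ℤ) (m : ℕ) (hm : m < n) :
    Jform u (yvec n m)
      = (if 1 ≤ m then xx u (m-1) else 0) - (if m + 1 < n then xx u (m+1) else 0) := by
  rw [Jform_eq]
  have key : ∀ k ∈ Finset.range (n-1),
      xx u k * xx (yvec n m) (k+1) - xx u (k+1) * xx (yvec n m) k
      = (if k + 1 = m then xx u k else 0) - (if k = m then xx u (k+1) else 0) := by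
    intro k hk
    rw [Finset.mem_range] at hk
    rw [xx_yvec m hm (k+1) (by omega), xx_yvec m hm k (by omega)]
    by_cases h1 : k + 1 = m <;> by_cases h2 : k = m <;>
      simp [h1, h2] <;> ring
  rw [Finset.sum_congr rfl key, Finset.sum_sub_distrib]
  congr 1
  · by_cases h0 : 1 ≤ m
    · rw [if_pos h0]
      have hcond : ∀ k : ℕ, (k + 1 = m) = (k = m - 1) := fun k => propext (by omega)
      simp only [hcond]
      rw [Finset.sum_ite_eq' (Finset.range (n-1)) (m-1) (fun k => xx u k),
        if_pos (Finset.mem_range.mpr (by omega))]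
    · rw [if_neg h0]
      apply Finset.sum_eq_zero
      intro k _
      rw [if_neg (by omega)]
  · rw [Finset.sum_ite_eq' (Finset.range (n-1)) m (fun k => xx u (k+1))]
    by_cases h : m + 1 < n
    · rw [if_pos (Finset.mem_range.mpr (by omega)), if_pos h]
    · rw [if_neg (by rw [Finset.mem_range]; omega), if_neg h]

lemma J_zero_imp (hn : 2 ≤ n) (he : Even n) (u : Fin n → ℤ)
    (h : ∀ w, Jform u w = 0) : u = 0 := by
  have hJ : ∀ m, m < n →
      (if 1 ≤ m then xx u (m-1) else 0) = (if m+1 < n then xx u (m+1) else 0) := by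
    intro m hm
    have h2 := h (yvec n m)
    rw [J_yvec u m hm] at h2
    linarith
  have h1 : xx u 1 = 0 := by
    have h2 := hJ 0 (by omega)
    rw [if_neg (by omega), if_pos (by omega)] at h2
    linarith
  have hrel : ∀ m, 1 ≤ m → m + 1 < n → xx u (m-1) = xx u (m+1) := by
    intro m hm1 hm2
    have h2 := hJ m (by omega)
    rw [if_pos hm1, if_pos hm2] at h2
    exact h2
  have hlast : xx u (n-2) = 0 := by
    have h2 := hJ (n-1) (by omega)
    rw [if_pos (by omega), if_neg (by omega), show n-1-1 = n-2 from by omega] at h2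
    exact h2
  have hodd : ∀ k, 2*k+1 < n → xx u (2*k+1) = 0 := by
    intro k
    induction k with
    | zero => intro _; exact h1
    | succ k ih =>
      intro hk
      have h2 := hrel (2*k+2) (by omega) (by omega)
      rw [show 2*k+2-1 = 2*k+1 from by omega, show 2*k+2+1 = 2*(k+1)+1 from by omega] at h2
      rw [← h2]
      exact ih (by omega)
  have heven : ∀ k, 2*k ≤ n-2 → xx u (n-2-2*k) = 0 := by
    intro k
    induction k with
    | zero => intro _; simpa using hlast
    | succ k ih =>
      intro hk
      have hik := ih (by omega)
      have h2 := hrel (n-3-2*k) (by omega) (by omega)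
      rw [show n-3-2*k-1 = n-2-2*(k+1) from by omega,
        show n-3-2*k+1 = n-2-2*k from by omega] at h2
      rw [h2]
      exact hik
  have hall : ∀ j, j < n → xx u j = 0 := by
    intro j hj
    rcases Nat.even_or_odd j with hje | hjo
    · obtain ⟨r, hr⟩ := hje
      obtain ⟨s, hs⟩ := he
      rw [show j = n - 2 - 2*((n-2-j)/2) from by omega]
      exact heven _ (by omega)
    · obtain ⟨r, hr⟩ := hjo
      rw [show j = 2*r+1 from by omega]
      exact hodd r (by omega)
  funext j
  have hv : vv u (j:ℕ) = 0 := by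
    rcases Nat.eq_zero_or_pos (j:ℕ) with h0 | h0
    · rw [h0, ← xx_zero]
      exact hall 0 (by omega)
    · obtain ⟨m, hm⟩ : ∃ m, (j:ℕ) = m + 1 := ⟨(j:ℕ)-1, by omega⟩
      have hs := xx_succ u m
      have ha1 := hall (m+1) (by have := j.isLt; omega)
      have ha2 := hall m (by have := j.isLt; omega)
      rw [hm]
      linarith [hs, ha1, ha2]
  rw [vv_coord] at hv
  simpa using hv

end JAux

/-- For even `n ≥ 2`, the alternating form `J` is non-degenerate
(`v ↦ J(v,·)` is injective) and invariant under `𝒢_n`. -/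
theorem Jform_nondegenerate_and_invariant (n : ℕ) (hn : 2 ≤ n) (heven : Even n) :
    Function.Injective (fun v : Fin n → ℤ => fun w : Fin n → ℤ => Jform v w) ∧
    ∀ T ∈ Gn n, ∀ v w : Fin n → ℤ, Jform (T v) (T w) = Jform v w := by
  constructor
  · intro v v' h
    have hz : ∀ w : Fin n → ℤ, Jform (v - v') w = 0 := by
      intro w
      rw [JAux.Jform_sub_left]
      have h2 : Jform v w = Jform v' w := congrFun h w
      rw [h2, sub_self]
    have h3 := JAux.J_zero_imp hn heven (v - v') hz
    exact sub_eq_zero.mp h3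
  · intro T hT
    have hT' : T ∈ Subgroup.closure (Set.range (Sgen n)) := hT
    clear hT
    induction hT' using Subgroup.closure_induction with
    | mem x hx =>
      obtain ⟨i, rfl⟩ := hx
      intro v w
      exact JAux.J_inv_gen hn heven i v w
    | one => intro v w; rfl
    | mul a b ha hb iha ihb =>
      intro v w
      exact (iha (b v) (b w)).trans (ihb v w)
    | inv a ha iha =>
      intro v w
      have e1 : ∀ u : Fin n → ℤ, a (a⁻¹ u) = u := fun u => a.apply_symm_apply u
      have h2 := (iha (a⁻¹ v) (a⁻¹ w)).symm
      rwa [e1, e1] at h2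
end

section
/- Let s ≥ 1 and n = 2s + 1. For every T ∈ 𝒢_{2s+1} and every nonzero v ∈ ℤ^{2s+1}, one has γ(Tv) = γ(v), δ(Tv) = δ(v), and x(Tv) = x(v); that is, the triple (γ, δ, x) is invariant under the action of 𝒢_{2s+1} on ℤ^{2s+1}. -/
-- gcd lemmas
theorem gam0 {n : ℕ} (v : Fin n → ℤ) (j : Fin n) : Finset.univ.gcd v ∣ v j := Finset.gcd_dvd (Finset.mem_univ j)

theorem gamnn {n : ℕ} (v : Fin n → ℤ) : 0 ≤ Finset.univ.gcd v := by
  rw [← Finset.normalize_gcd, ← Int.abs_eq_normalize]; exact abs_nonneg _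

theorem gam_dvd_SFun {n : ℕ} (i : Fin n) (v : Fin n → ℤ) (j : Fin n) :
    Finset.univ.gcd v ∣ SFun n i v j := by
  unfold SFun
  split_ifs <;>
    first
      | exact gam0 v _
      | exact dvd_add (gam0 v _) (gam0 v _)
      | exact dvd_sub ((gam0 v _).mul_left 2) (gam0 v _)

theorem gam_dvd_SInvFun {n : ℕ} (i : Fin n) (w : Fin n → ℤ) (j : Fin n) :
    Finset.univ.gcd w ∣ SInvFun n i w j := by
  unfold SInvFun
  split_ifs <;>
    first
      | exact gam0 w _
      | exact dvd_sub (gam0 w _) (gam0 w _)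
      | exact dvd_sub ((gam0 w _).mul_left 2) (gam0 w _)

theorem gamS' {n : ℕ} (i : Fin n) (v : Fin n → ℤ) :
    Finset.univ.gcd (SFun n i v) = Finset.univ.gcd v := by
  have h1 : Finset.univ.gcd v ∣ Finset.univ.gcd (SFun n i v) :=
    Finset.dvd_gcd fun j _ => gam_dvd_SFun i v j
  have h2 : Finset.univ.gcd (SFun n i v) ∣ Finset.univ.gcd v := by
    refine Finset.dvd_gcd fun j _ => ?_
    conv_rhs => rw [← left_inv_S n i v]
    exact gam_dvd_SInvFun i (SFun n i v) j
  exact Int.dvd_antisymm (gamnn _) (gamnn _) h2 h1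



theorem xaltS' {n : ℕ} (hn : Odd n) (i : Fin n) (v : Fin n → ℤ) :
    xalt (SFun n i v) = xalt v := by
  by_cases h : (i : ℕ) = 0
  · have key : ∑ j : Fin n, (-1:ℤ)^(j:ℕ) = 1 := by
      rw [Fin.sum_univ_eq_sum_range (fun j => (-1:ℤ)^j), neg_one_geom_sum,
        if_neg (Nat.not_even_iff_odd.mpr hn)]
    have key2 : ∑ j : Fin n, (if (j:ℕ) = 0 then (1:ℤ) else 0) = 1 := by
      rw [Fin.sum_univ_eq_sum_range (fun j => if j = 0 then (1:ℤ) else 0)]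
      rw [Finset.sum_ite_eq' (Finset.range n) 0 (fun _ => (1:ℤ))]
      rw [if_pos (Finset.mem_range.mpr hn.pos)]
    have step : ∀ j : Fin n, (-1:ℤ)^(j:ℕ) * SFun n i v j
        = (-1:ℤ)^(j:ℕ) * v j + ((-1:ℤ)^(j:ℕ) - if (j:ℕ) = 0 then 1 else 0) * v i := by
      intro j
      unfold SFun
      rw [if_pos h]
      by_cases hj : (j:ℕ) = 0
      · rw [if_pos hj, if_pos hj, hj]; norm_num
      · rw [if_neg hj, if_neg hj]; ring
    unfold xalt
    rw [Finset.sum_congr rfl fun j _ => step j, Finset.sum_add_distrib, ← Finset.sum_mul,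
      Finset.sum_sub_distrib, key, key2]
    ring
  · have hne := ipred_ne i h
    have step : ∀ j : Fin n, (-1:ℤ)^(j:ℕ) * SFun n i v j - (-1:ℤ)^(j:ℕ) * v j
        = ((if j = ipred i then (-1:ℤ)^(j:ℕ) else 0)
          + (if j = i then (-1:ℤ)^(j:ℕ) else 0)) * (v (ipred i) - v i) := by
      intro j
      unfold SFun
      rw [if_neg h]
      by_cases h1 : j = ipred i
      · rw [if_pos h1, if_pos h1, if_neg (h1 ▸ hne)]
        subst h1; ring
      · rw [if_neg h1, if_neg h1]
        by_cases h2 : j = i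
        · rw [if_pos h2, if_pos h2]; subst h2; ring
        · rw [if_neg h2, if_neg h2]; ring
    have hsum : ∑ j : Fin n, ((if j = ipred i then (-1:ℤ)^(j:ℕ) else 0)
          + (if j = i then (-1:ℤ)^(j:ℕ) else 0))
        = (-1:ℤ)^((ipred i : Fin n):ℕ) + (-1:ℤ)^((i:Fin n):ℕ) := by
      rw [Finset.sum_add_distrib]
      congr 1 <;> simp
    have hpow : (-1:ℤ)^((ipred i : Fin n):ℕ) + (-1:ℤ)^((i:Fin n):ℕ) = 0 := by
      have hv : (i:ℕ) = ((i:ℕ) - 1) + 1 := by omega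
      show (-1:ℤ)^((i:ℕ)-1) + (-1:ℤ)^(i:ℕ) = 0
      have h2 : (-1:ℤ)^(i:ℕ) = -(-1:ℤ)^((i:ℕ)-1) := by
        conv_lhs => rw [hv]
        rw [pow_succ]; ring
      rw [h2]; ring
    have : xalt (SFun n i v) - xalt v = 0 := by
      unfold xalt
      rw [← Finset.sum_sub_distrib, Finset.sum_congr rfl fun j _ => step j,
        ← Finset.sum_mul, hsum, hpow, zero_mul]
    linarith








theorem gamS2 {n : ℕ} (i : Fin n) (v : Fin n → ℤ) : gam (SFun n i v) = gam v :=
  gamS' i v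

theorem deltS' {n : ℕ} (i : Fin n) (v : Fin n → ℤ) (hv : v ≠ 0) :
    delt (SFun n i v) = delt v := by
  classical
  have hg0 : gam v ≠ 0 := by
    intro h0
    apply hv
    funext j
    exact Finset.gcd_eq_zero_iff.mp h0 j (Finset.mem_univ j)
  have hdvd : ∀ j, gam v ∣ v j := fun j => gam0 v j
  have hdivadd : ∀ a b : ℤ, gam v ∣ a → gam v ∣ b →
      (a + b) / gam v = a / gam v + b / gam v := by
    rintro a b ⟨a', rfl⟩ ⟨b', rfl⟩
    rw [← mul_add, Int.mul_ediv_cancel_left _ hg0, Int.mul_ediv_cancel_left _ hg0,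
      Int.mul_ediv_cancel_left _ hg0]
  have hdivsub : ∀ a b : ℤ, gam v ∣ a → gam v ∣ b →
      (2 * a - b) / gam v = 2 * (a / gam v) - b / gam v := by
    rintro a b ⟨a', rfl⟩ ⟨b', rfl⟩
    rw [show 2 * (gam v * a') - gam v * b' = gam v * (2 * a' - b') by ring,
      Int.mul_ediv_cancel_left _ hg0, Int.mul_ediv_cancel_left _ hg0,
      Int.mul_ediv_cancel_left _ hg0]
  by_cases h : (i : ℕ) = 0
  · have hii : ∀ j : Fin n, (j : ℕ) = 0 → j = i := fun j hj => Fin.ext (by omega)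
    have hwj : ∀ j, j ≠ i → SFun n i v j = v j + v i := by
      intro j hj
      unfold SFun
      rw [if_pos h, if_neg (fun hc => hj (hii j hc))]
    have hwi : SFun n i v i = v i := by unfold SFun; rw [if_pos h, if_pos h]
    by_cases ha : Odd (v i / gam v)
    · -- odd pivot: parities flip off the pivot
      have hset : (Finset.univ.filter fun j => Odd (SFun n i v j / gam v))
          = insert i (Finset.univ.filter fun j => ¬ Odd (v j / gam v)) := by
        ext j
        simp only [Finset.mem_filter, Finset.mem_insert, Finset.mem_univ, true_and]
        by_cases hj : j = i
        · subst hj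
          rw [hwi]
          exact ⟨fun _ => Or.inl rfl, fun _ => ha⟩
        · rw [hwj j hj, hdivadd _ _ (hdvd j) (hdvd i)]
          have hodd : Odd (v j / gam v + v i / gam v) ↔ ¬ Odd (v j / gam v) := by
            rw [Int.odd_iff] at ha ⊢
            rw [Int.odd_iff]
            omega
          rw [hodd]
          exact ⟨fun hh => Or.inr hh, fun hh => hh.resolve_left hj⟩
      have hnm : i ∉ (Finset.univ.filter fun j => ¬ Odd (v j / gam v)) := by
        simp only [Finset.mem_filter, Finset.mem_univ, true_and, not_not]
        exact ha
      have hcard : alph (SFun n i v)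
          = (Finset.univ.filter fun j => ¬ Odd (v j / gam v)).card + 1 := by
        unfold alph
        rw [gamS2]
        rw [hset, Finset.card_insert_of_notMem hnm]
      have hsplit : alph v + (Finset.univ.filter fun j => ¬ Odd (v j / gam v)).card = n := by
        unfold alph
        rw [Finset.card_filter_add_card_filter_not, Finset.card_univ, Fintype.card_fin]
      unfold delt
      have hZ : (2 * (alph (SFun n i v) : ℤ) - n - 1) = -(2 * (alph v : ℤ) - n - 1) := by
        omega
      rw [hZ, abs_neg]
    · -- even pivot: parities unchanged
      have hα : alph (SFun n i v) = alph v := by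
        unfold alph
        rw [gamS2]
        congr 1
        apply Finset.filter_congr
        intro j _
        by_cases hj : j = i
        · subst hj; rw [hwi]
        · rw [hwj j hj, hdivadd _ _ (hdvd j) (hdvd i)]
          rw [Int.not_odd_iff_even, Int.even_iff] at ha
          rw [Int.odd_iff, Int.odd_iff]
          omega
      unfold delt
      rw [hα]
  · have hne := ipred_ne i h
    have hwp : SFun n i v (ipred i) = 2 * v (ipred i) - v i := by
      unfold SFun; rw [if_neg h, if_pos rfl]
    have hwi : SFun n i v i = v (ipred i) := by
      unfold SFun; rw [if_neg h, if_neg (Ne.symm hne), if_pos rfl]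
    have hwo : ∀ j, j ≠ ipred i → j ≠ i → SFun n i v j = v j := by
      intro j h1 h2; unfold SFun; rw [if_neg h, if_neg h1, if_neg h2]
    have hα : alph (SFun n i v) = alph v := by
      unfold alph
      rw [gamS2]
      apply Finset.card_equiv (Equiv.swap (ipred i) i)
      intro j
      simp only [Finset.mem_filter, Finset.mem_univ, true_and]
      by_cases h1 : j = ipred i
      · subst h1
        rw [Equiv.swap_apply_left, hwp, hdivsub _ _ (hdvd _) (hdvd _)]
        rw [Int.odd_iff, Int.odd_iff]
        omega
      · by_cases h2 : j = i
        · subst h2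
          rw [Equiv.swap_apply_right, hwi]
        · rw [Equiv.swap_apply_of_ne_of_ne h1 h2, hwo j h1 h2]
    unfold delt
    rw [hα]


theorem main_theorem_aux (s : ℕ) :
    ∀ T ∈ Gn (2 * s + 1), ∀ v : Fin (2 * s + 1) → ℤ, v ≠ 0 →
      gam (T v) = gam v ∧ delt (T v) = delt v ∧ xalt (T v) = xalt v := by
  intro T hT
  have hn : Odd (2 * s + 1) := ⟨s, by ring⟩
  refine Subgroup.closure_induction
    (p := fun T _ => ∀ v : Fin (2 * s + 1) → ℤ, v ≠ 0 →
      gam (T v) = gam v ∧ delt (T v) = delt v ∧ xalt (T v) = xalt v) ?_ ?_ ?_ ?_ hT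
  · rintro x ⟨i, rfl⟩ v hv
    have hx : Sgen (2 * s + 1) i v = SFun (2 * s + 1) i v := rfl
    rw [hx]
    exact ⟨gamS2 i v, deltS' i v hv, xaltS' hn i v⟩
  · intro v hv
    exact ⟨rfl, rfl, rfl⟩
  · intro x y hx hy hxp hyp v hv
    have hyv : y v ≠ 0 := (LinearEquiv.map_ne_zero_iff y).mpr hv
    have hmul : (x * y) v = x (y v) := rfl
    obtain ⟨g1, d1, x1⟩ := hxp (y v) hyv
    obtain ⟨g2, d2, x2⟩ := hyp v hv
    rw [hmul]
    exact ⟨g1.trans g2, d1.trans d2, x1.trans x2⟩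
  · intro x hx hxp v hv
    have hiv : x⁻¹ v ≠ 0 := (LinearEquiv.map_ne_zero_iff _).mpr hv
    obtain ⟨g1, d1, x1⟩ := hxp (x⁻¹ v) hiv
    have hxi : x (x⁻¹ v) = v := x.apply_symm_apply v
    rw [hxi] at g1 d1 x1
    exact ⟨g1.symm, d1.symm, x1.symm⟩

/-- For `n = 2s + 1`, the triple `(γ, δ, x)` is invariant under the
action of `𝒢_{2s+1}` on `ℤ^{2s+1}`. -/
theorem gam_delt_xalt_invariant (s : ℕ) (hs : 1 ≤ s) :
    ∀ T ∈ Gn (2 * s + 1), ∀ v : Fin (2 * s + 1) → ℤ, v ≠ 0 →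
      gam (T v) = gam v ∧ delt (T v) = delt v ∧ xalt (T v) = xalt v := by
  exact main_theorem_aux s
end

section
/- Let n ≥ 2. For every i with 1 ≤ i ≤ n − 1, the automorphisms S_i and S_{i+1} of ℤ^n satisfy the relation (S_i S_{i+1} S_i)^4 = 1, i.e., the fourth power of the composite S_i ∘ S_{i+1} ∘ S_i is the identity map of ℤ^n. -/
/-- The composite `S_i ∘ S_{i+1} ∘ S_i` computed explicitly. -/
def Tfun (n : ℕ) (i : Fin n) (h : (i : ℕ) + 1 < n) (v : Fin n → ℤ) : Fin n → ℤ := fun j =>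
  if (i : ℕ) = 0 then
    (if (j : ℕ) = 0 then v i - v ⟨(i : ℕ) + 1, h⟩
     else if j = ⟨(i : ℕ) + 1, h⟩ then 2 * v i - v ⟨(i : ℕ) + 1, h⟩
     else v j + 2 * v i - v ⟨(i : ℕ) + 1, h⟩)
  else
    (if j = ipred i then 2 * v (ipred i) - 2 * v i + v ⟨(i : ℕ) + 1, h⟩
     else if j = i then 2 * v (ipred i) - v i
     else if j = ⟨(i : ℕ) + 1, h⟩ then v (ipred i)
     else v j)

theorem ipred_succ {n : ℕ} (i : Fin n) (h : (i : ℕ) + 1 < n) :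
    ipred ⟨(i : ℕ) + 1, h⟩ = i := by
  apply Fin.ext; simp [ipred]

theorem succ_ne {n : ℕ} (i : Fin n) (h : (i : ℕ) + 1 < n) :
    (⟨(i : ℕ) + 1, h⟩ : Fin n) ≠ i := by
  intro hc; have := congrArg Fin.val hc; simp at this

theorem succ_ne_ipred {n : ℕ} (i : Fin n) (h : (i : ℕ) + 1 < n) :
    (⟨(i : ℕ) + 1, h⟩ : Fin n) ≠ ipred i := by
  intro hc; have := congrArg Fin.val hc; simp [ipred] at this; omega

theorem T_apply (n : ℕ) (i : Fin n) (h : (i : ℕ) + 1 < n) (v : Fin n → ℤ) :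
    SFun n i (SFun n ⟨(i : ℕ) + 1, h⟩ (SFun n i v)) = Tfun n i h v := by
  have h1v : ((⟨(i : ℕ) + 1, h⟩ : Fin n) : ℕ) = (i : ℕ) + 1 := rfl
  have hps := ipred_succ i h
  have hs1 := succ_ne i h
  have hs2 := succ_ne_ipred i h
  by_cases hi : (i : ℕ) = 0
  · have hid : ((i : ℕ) = 0) = True := by simp [hi]
    have h10 : ((((⟨(i : ℕ) + 1, h⟩ : Fin n)) : ℕ) = 0) = False := by
      simp only [h1v]; simp
    funext j
    by_cases hj : (j : ℕ) = 0
    · have hji : j = i := Fin.ext (by omega)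
      simp [SFun, Tfun, hid, h10, hps, hji, hs1, Ne.symm hs1]
      ring
    · have hjd : ((j : ℕ) = 0) = False := by simp [hj]
      have hji : j ≠ i := fun hc => hj (by rw [hc]; exact hi)
      by_cases hj1 : j = ⟨(i : ℕ) + 1, h⟩
      · simp [SFun, Tfun, hid, h10, hjd, hps, hj1, hji, hs1, Ne.symm hs1]
        ring
      · simp [SFun, Tfun, hid, h10, hjd, hps, hj1, hji, hs1, Ne.symm hs1]
        ring
  · have hpi := ipred_ne i hi
    funext j
    by_cases h1 : j = ipred i
    · simp [SFun, Tfun, hi, h1v, hps, h1, hpi, Ne.symm hpi, hs1, Ne.symm hs1, hs2, Ne.symm hs2]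
      ring
    · by_cases h2 : j = i
      · simp [SFun, Tfun, hi, h1v, hps, h1, h2, hpi, Ne.symm hpi, hs1, Ne.symm hs1, hs2,
          Ne.symm hs2]
      · by_cases h3 : j = ⟨(i : ℕ) + 1, h⟩
        · simp [SFun, Tfun, hi, h1v, hps, h1, h2, h3, hpi, Ne.symm hpi, hs1, Ne.symm hs1, hs2,
            Ne.symm hs2]
        · simp [SFun, Tfun, hi, h1v, hps, h1, h2, h3, hpi, Ne.symm hpi, hs1, Ne.symm hs1, hs2,
            Ne.symm hs2]

theorem T_four (n : ℕ) (i : Fin n) (h : (i : ℕ) + 1 < n) (v : Fin n → ℤ) :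
    Tfun n i h (Tfun n i h (Tfun n i h (Tfun n i h v))) = v := by
  have h1v : ((⟨(i : ℕ) + 1, h⟩ : Fin n) : ℕ) = (i : ℕ) + 1 := rfl
  have hps := ipred_succ i h
  have hs1 := succ_ne i h
  have hs2 := succ_ne_ipred i h
  by_cases hi : (i : ℕ) = 0
  · have hid : ((i : ℕ) = 0) = True := by simp [hi]
    funext j
    by_cases hj : (j : ℕ) = 0
    · have hji : j = i := Fin.ext (by omega)
      simp [Tfun, hid, hj, hji, hs1, Ne.symm hs1]
      ring
    · have hjd : ((j : ℕ) = 0) = False := by simp [hj]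
      have hji : j ≠ i := fun hc => hj (by rw [hc]; exact hi)
      by_cases hj1 : j = ⟨(i : ℕ) + 1, h⟩
      · simp [Tfun, hid, hjd, hj1, hji, hs1, Ne.symm hs1]; ring
      · simp [Tfun, hid, hjd, hj1, hji, hs1, Ne.symm hs1]; ring
  · have hpi := ipred_ne i hi
    funext j
    by_cases h1 : j = ipred i
    · simp [Tfun, hi, h1, hpi, Ne.symm hpi, hs1, Ne.symm hs1, hs2, Ne.symm hs2]; ring
    · by_cases h2 : j = i
      · simp [Tfun, hi, h1, h2, hpi, Ne.symm hpi, hs1, Ne.symm hs1, hs2, Ne.symm hs2]; ring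
      · by_cases h3 : j = ⟨(i : ℕ) + 1, h⟩
        · simp [Tfun, hi, h1, h2, h3, hpi, Ne.symm hpi, hs1, Ne.symm hs1, hs2, Ne.symm hs2]
          ring
        · simp [Tfun, hi, h1, h2, h3, hpi, Ne.symm hpi, hs1, Ne.symm hs1, hs2, Ne.symm hs2]

/-- The relation `(S_i S_{i+1} S_i)^4 = 1` holds for consecutive
generators acting on `ℤ^n`. -/
theorem braid_rel_four (n : ℕ) (hn : 2 ≤ n) (i : Fin n) (h : (i : ℕ) + 1 < n) :
    (Sgen n i * Sgen n ⟨(i : ℕ) + 1, h⟩ * Sgen n i) ^ 4 = 1 := by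
  refine DFunLike.ext _ _ fun v => ?_
  have happ : ∀ (f g : (Fin n → ℤ) ≃ₗ[ℤ] (Fin n → ℤ)) (w : Fin n → ℤ),
      (f * g) w = f (g w) := fun _ _ _ => rfl
  have hS : ∀ (k : Fin n) (w : Fin n → ℤ), Sgen n k w = SFun n k w := fun _ _ => rfl
  show ((Sgen n i * Sgen n ⟨(i : ℕ) + 1, h⟩ * Sgen n i) ^ 4) v = v
  rw [show (4 : ℕ) = 3 + 1 from rfl, pow_succ, pow_succ, pow_succ, pow_one]
  simp only [happ, hS]
  rw [T_apply, T_apply, T_apply, T_apply, T_four]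
end

section
/- Let n ≥ 2. For every k ≥ 1 and every i ≥ 1 with i + 2k − 1 ≤ n, the automorphisms S_i, S_{i+1}, …, S_{i+2k−1} of ℤ^n satisfy the relation (S_i S_{i+1} ⋯ S_{i+2k−1})^{2(2k+1)} = 1, i.e., the 2(2k+1)-th power of the composite S_i ∘ S_{i+1} ∘ ⋯ ∘ S_{i+2k−1} is the identity map of ℤ^n. -/
/-- Extension of `v : Fin n → ℤ` to `ℕ` by zero. -/
def Ev {n : ℕ} (v : Fin n → ℤ) (t : ℕ) : ℤ := if h : t < n then v ⟨t, h⟩ else 0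

lemma Ev_lt {n : ℕ} (v : Fin n → ℤ) {t : ℕ} (h : t < n) : Ev v t = v ⟨t, h⟩ := dif_pos h

lemma Ev_fin {n : ℕ} (v : Fin n → ℤ) (l : Fin n) : Ev v l.1 = v l := by
  rw [Ev_lt v l.isLt]

lemma Sgen_apply (n : ℕ) (q : Fin n) (v : Fin n → ℤ) : Sgen n q v = SFun n q v := rfl

lemma one_apply' {n : ℕ} (v : Fin n → ℤ) :
    (1 : (Fin n → ℤ) ≃ₗ[ℤ] (Fin n → ℤ)) v = v := rfl

lemma mul_apply' {n : ℕ} (a b : (Fin n → ℤ) ≃ₗ[ℤ] (Fin n → ℤ)) (v : Fin n → ℤ) :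
    (a * b) v = a (b v) := rfl

/-- Formula for the composite of consecutive generators `S_j, …, S_{j+m-1}` (all with
index ≥ 1). -/
lemma chain_apply {n : ℕ} (m : ℕ) : ∀ (j : ℕ), 1 ≤ j → j + m ≤ n →
    ∀ (f : Fin m → Fin n), (∀ t, (f t : ℕ) = j + (t : ℕ)) →
    ∀ (v : Fin n → ℤ) (l : Fin n),
    (List.ofFn fun t => Sgen n (f t)).prod v l =
      if l.1 + 1 = j then
        (∑ t ∈ Finset.range m, 2 * (-1:ℤ)^t * Ev v (j - 1 + t)) + (-1)^m * Ev v (j - 1 + m)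
      else if j ≤ l.1 ∧ l.1 < j + m then Ev v (l.1 - 1)
      else v l := by
  induction m with
  | zero =>
    intro j hj hjm f hf v l
    simp only [List.ofFn_zero, List.prod_nil, Finset.range_zero, Finset.sum_empty,
      pow_zero, one_apply', zero_add, one_mul, Nat.add_zero]
    by_cases hl : l.1 + 1 = j
    · rw [if_pos hl]
      have h1 : j - 1 = l.1 := by omega
      rw [h1, Ev_fin]
    · rw [if_neg hl, if_neg (by omega)]
  | succ m ih =>
    intro j hj hjm f hf v l
    rw [List.ofFn_succ, List.prod_cons, mul_apply']
    set w := (List.ofFn fun t : Fin m => Sgen n (f t.succ)).prod v with hw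
    have hwl : ∀ l' : Fin n, w l' = if l'.1 + 1 = j + 1 then
        (∑ t ∈ Finset.range m, 2 * (-1:ℤ)^t * Ev v (j + t)) + (-1)^m * Ev v (j + m)
      else if j + 1 ≤ l'.1 ∧ l'.1 < j + 1 + m then Ev v (l'.1 - 1) else v l' := by
      intro l'
      have := ih (j+1) (by omega) (by omega) (fun t => f t.succ)
        (fun t => by rw [hf]; simp [Fin.val_succ]; omega) v l'
      simpa using this
    have hf0 : (f 0 : ℕ) = j := by rw [hf]; simp
    have hnz : ¬ ((f 0 : ℕ) = 0) := by omega
    have hip : (ipred (f 0) : ℕ) = j - 1 := by simp [ipred, hf0]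
    rw [Sgen_apply]
    simp only [SFun, if_neg hnz]
    by_cases h1 : l = ipred (f 0)
    · rw [if_pos h1]
      have hl1 : l.1 = j - 1 := by rw [h1]; exact hip
      have hwll : w l = v l := by
        rw [hwl]; rw [if_neg (by omega), if_neg (by omega)]
      have hwf0 : w (f 0) =
          (∑ t ∈ Finset.range m, 2 * (-1:ℤ)^t * Ev v (j + t)) + (-1)^m * Ev v (j + m) := by
        rw [hwl, if_pos (by omega)]
      rw [hwll, hwf0, if_pos (by omega : l.1 + 1 = j)]
      have hsum : ∑ t ∈ Finset.range (m+1), 2 * (-1:ℤ)^t * Ev v (j - 1 + t) =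
          (∑ t ∈ Finset.range m, -(2 * (-1:ℤ)^t * Ev v (j + t))) + 2 * Ev v (j - 1) := by
        rw [Finset.sum_range_succ']
        have hcg : ∀ t ∈ Finset.range m, 2 * (-1:ℤ)^(t+1) * Ev v (j - 1 + (t+1)) =
            -(2 * (-1:ℤ)^t * Ev v (j + t)) := by
          intro t _
          have hidx : j - 1 + (t + 1) = j + t := by omega
          rw [hidx]; ring
        rw [Finset.sum_congr rfl hcg, show j - 1 + 0 = j - 1 by omega]
        ring
      rw [hsum, Finset.sum_neg_distrib]
      have hidx2 : j - 1 + (m + 1) = j + m := by omega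
      rw [hidx2]
      have hEl : Ev v (j - 1) = v l := by
        rw [show j - 1 = l.1 by omega, Ev_fin]
      rw [hEl]
      ring
    · rw [if_neg h1]
      by_cases h2 : l = f 0
      · rw [if_pos h2]
        have hl1 : l.1 = j := by rw [h2]; exact hf0
        have : w (ipred (f 0)) = v (ipred (f 0)) := by
          rw [hwl]; rw [if_neg (by omega), if_neg (by omega)]
        rw [this, if_neg (by omega), if_pos (by omega : j ≤ l.1 ∧ l.1 < j + (m+1))]
        rw [← Ev_fin v (ipred (f 0)), hip]
        congr 1
        omega
      · rw [if_neg h2, hwl]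
        have hl1 : ¬ l.1 = j - 1 := fun hc => h1 (Fin.ext (by omega))
        have hl2 : ¬ l.1 = j := fun hc => h2 (Fin.ext (by omega))
        by_cases h3 : j + 1 ≤ l.1 ∧ l.1 < j + 1 + m
        · rw [if_neg (by omega), if_pos h3, if_neg (by omega),
            if_pos (by omega : j ≤ l.1 ∧ l.1 < j + (m+1))]
        · rw [if_neg (by omega), if_neg h3, if_neg (by omega), if_neg (by omega)]
/-- For any `2k` consecutive generators `S_{i}, …, S_{i+2k-1}`
(0-indexed here, with `i + 2k ≤ n`), the `2(2k+1)`-st power of their composite is the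
identity. -/
theorem braid_rel_long (n : ℕ) (hn : 2 ≤ n) (k i : ℕ) (hk : 1 ≤ k)
    (h : i + 2 * k ≤ n) :
    ((List.ofFn fun t : Fin (2 * k) =>
        Sgen n ⟨i + (t : ℕ), by have := t.isLt; omega⟩).prod) ^ (2 * (2 * k + 1)) =
      1 := by
  set P : (Fin n → ℤ) ≃ₗ[ℤ] (Fin n → ℤ) :=
    (List.ofFn fun t : Fin (2 * k) =>
        Sgen n ⟨i + (t : ℕ), by have := t.isLt; omega⟩).prod with hP
  have hpow : ∀ (v : Fin n → ℤ) (m : ℕ), (P ^ (m+1)) v = P ((P ^ m) v) := by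
    intro v m; rw [pow_succ', mul_apply']
  refine LinearEquiv.ext fun v => ?_
  show (P ^ (2*(2*k+1))) v = v
  rcases Nat.eq_zero_or_pos i with hi0 | hipos
  · -- Case i = 0
    subst hi0
    obtain ⟨k2, hk2⟩ : ∃ m, 2*k = m + 1 := ⟨2*k - 1, by omega⟩
    set uv : (Fin n → ℤ) → ℤ :=
      fun w => ∑ t ∈ Finset.range (2*k), (-1:ℤ)^t * Ev w t with huv
    have hk2odd : ¬ Even k2 := by
      rintro ⟨r, hr⟩; omega
    have h2 : (-1:ℤ)^k2 = -1 := by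
      rcases Nat.even_or_odd k2 with he | ho
      · exact absurd he hk2odd
      · exact ho.neg_one_pow
    have hσ : (∑ t ∈ Finset.range k2, (-1:ℤ)^t) = 1 := by
      rw [neg_one_geom_sum, if_neg hk2odd]
    have hlist : P = Sgen n ⟨0, by omega⟩ *
        (List.ofFn fun t : Fin k2 =>
          Sgen n ⟨1 + (t : ℕ), by have := t.isLt; omega⟩).prod := by
      rw [hP, List.ofFn_congr hk2, List.ofFn_succ, List.prod_cons]
      congr 1
      · refine congrArg List.prod (congrArg List.ofFn ?_)
        funext t
        congr 1
        refine Fin.ext ?_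
        show 0 + ((Fin.cast hk2.symm t.succ) : ℕ) = 1 + (t : ℕ)
        rw [Fin.coe_cast, Fin.val_succ]
        omega
    have honeB : ∀ (w : Fin n → ℤ) (l : Fin n), P w l =
        if l.1 = 0 then 2 * uv w + Ev w (2*k-1)
        else if l.1 < 2*k then Ev w (l.1 - 1) + (2 * uv w + Ev w (2*k-1))
        else w l + (2 * uv w + Ev w (2*k-1)) := by
      intro w l
      rw [hlist, mul_apply']
      set y := (List.ofFn fun t : Fin k2 =>
        Sgen n ⟨1 + (t : ℕ), by have := t.isLt; omega⟩).prod w with hy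
      have hyl : ∀ l' : Fin n, y l' =
          if l'.1 + 1 = 1 then
            (∑ t ∈ Finset.range k2, 2 * (-1:ℤ)^t * Ev w (1 - 1 + t))
              + (-1:ℤ)^k2 * Ev w (1 - 1 + k2)
          else if 1 ≤ l'.1 ∧ l'.1 < 1 + k2 then Ev w (l'.1 - 1) else w l' :=
        fun l' => chain_apply k2 1 le_rfl (by omega) _ (fun t => rfl) w l'
      have hC : (∑ t ∈ Finset.range k2, 2 * (-1:ℤ)^t * Ev w (1 - 1 + t))
          + (-1:ℤ)^k2 * Ev w (1 - 1 + k2) = 2 * uv w + Ev w (2*k-1) := by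
        have h1 : uv w = (∑ t ∈ Finset.range k2, (-1:ℤ)^t * Ev w t)
            + (-1:ℤ)^k2 * Ev w k2 := by
          rw [huv]
          simp only [hk2]
          exact Finset.sum_range_succ _ _
        have h3 : ∀ t, 1 - 1 + t = t := fun t => by omega
        simp only [h3]
        rw [h2] at h1 ⊢
        rw [show (∑ t ∈ Finset.range k2, 2 * (-1:ℤ)^t * Ev w t)
            = 2 * ∑ t ∈ Finset.range k2, (-1:ℤ)^t * Ev w t from by
          rw [Finset.mul_sum]; exact Finset.sum_congr rfl fun t _ => by ring]
        rw [show (∑ t ∈ Finset.range k2, (-1:ℤ)^t * Ev w t)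
            = uv w + Ev w k2 from by rw [h1]; ring]
        rw [show (2*k - 1 : ℕ) = k2 from by omega]
        ring
      have hy0 : y ⟨0, by omega⟩ = 2 * uv w + Ev w (2*k-1) := by
        rw [hyl, if_pos (show (0:ℕ) + 1 = 1 from rfl), hC]
      rw [Sgen_apply]
      show (if ((⟨0, by omega⟩ : Fin n) : ℕ) = 0 then
          (if (l:ℕ) = 0 then y l else y l + y ⟨0, by omega⟩) else _) = _
      rw [if_pos (show ((⟨0, by omega⟩ : Fin n) : ℕ) = 0 from rfl)]
      by_cases hc : (l : ℕ) = 0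
      · rw [if_pos hc, if_pos hc]
        have hl0 : l = (⟨0, by omega⟩ : Fin n) := Fin.ext hc
        rw [hl0, hy0]
      · rw [if_neg hc, if_neg hc, hy0, hyl]
        rw [if_neg (by omega)]
        by_cases hc2 : (l : ℕ) < 2*k
        · rw [if_pos (show 1 ≤ l.1 ∧ l.1 < 1 + k2 by omega), if_pos hc2]
        · rw [if_neg (by omega), if_neg hc2]
    have hustep : ∀ w, uv (P w) = -(uv w + Ev w (2*k-1)) := by
      intro w
      have hd : ∀ t, t < k2 → Ev (P w) (t+1) = Ev w t + (2 * uv w + Ev w (2*k-1)) := by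
        intro t ht
        have hlt : t + 1 < n := by omega
        rw [Ev_lt _ hlt, honeB]
        rw [if_neg (show ¬ (t + 1 = 0) by omega), if_pos (show t + 1 < 2*k by omega)]
        rfl
      have e0 : Ev (P w) 0 = 2 * uv w + Ev w (2*k-1) := by
        have hlt : (0:ℕ) < n := by omega
        rw [Ev_lt _ hlt, honeB, if_pos (show (0:ℕ) = 0 from rfl)]
      have h1 : (∑ t ∈ Finset.range k2, (-1:ℤ)^t * Ev w t) = uv w + Ev w k2 := by
        have : uv w = (∑ t ∈ Finset.range k2, (-1:ℤ)^t * Ev w t)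
            + (-1:ℤ)^k2 * Ev w k2 := by
          rw [huv]; simp only [hk2]; exact Finset.sum_range_succ _ _
        rw [this, h2]; ring
      have hσ' : (∑ t ∈ Finset.range k2, (-1:ℤ)^(t+1)) = -1 := by
        have hcg : ∀ t ∈ Finset.range k2, (-1:ℤ)^(t+1) = -((-1:ℤ)^t) :=
          fun t _ => by ring
        rw [Finset.sum_congr rfl hcg, Finset.sum_neg_distrib, hσ]
      have hstart : uv (P w) = (∑ t ∈ Finset.range k2, (-1:ℤ)^(t+1) * Ev (P w) (t+1))
          + (-1:ℤ)^0 * Ev (P w) 0 := by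
        rw [huv]; simp only [hk2]; exact Finset.sum_range_succ' _ _
      have hsplit : (∑ t ∈ Finset.range k2, (-1:ℤ)^(t+1) * Ev (P w) (t+1))
          = (∑ t ∈ Finset.range k2, -((-1:ℤ)^t * Ev w t))
            + (∑ t ∈ Finset.range k2, (-1:ℤ)^(t+1)) * (2 * uv w + Ev w (2*k-1)) := by
        rw [Finset.sum_mul, ← Finset.sum_add_distrib]
        refine Finset.sum_congr rfl fun t ht => ?_
        rw [hd t (Finset.mem_range.mp ht)]
        ring
      rw [hstart, e0, pow_zero, one_mul, hsplit, Finset.sum_neg_distrib, hσ', h1,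
        show (2*k - 1 : ℕ) = k2 from by omega]
      ring
    have claimB : ∀ (v : Fin n → ℤ) (m : ℕ), 1 ≤ m → m ≤ 2*k →
        (∀ l : Fin n, (P ^ m) v l =
          if l.1 + 2 ≤ m then Ev v (2*k - m) - Ev v (2*k + 1 + l.1 - m)
          else if l.1 + 1 = m then 2 * uv v + Ev v (2*k - m)
          else if l.1 < 2*k then Ev v (l.1 - m) + (2 * uv v + Ev v (2*k - m))
          else v l + (2 * uv v + Ev v (2*k - m)))
          ∧ uv ((P ^ m) v) = -(Ev v (2*k - m) + uv v) := by
      intro v m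
      induction m with
      | zero => intro h1 _; exact absurd h1 (by omega)
      | succ m ih =>
        intro _ hm2
        rcases Nat.eq_zero_or_pos m with hm0 | hmpos
        · subst hm0
          constructor
          · intro l
            rw [pow_one, honeB]
            by_cases hc : l.1 = 0
            · rw [if_pos hc, if_neg (by omega), if_pos (by omega)]
            · rw [if_neg hc, if_neg (show ¬ (l.1 + 2 ≤ 0 + 1) by omega),
                if_neg (show ¬ (l.1 + 1 = 0 + 1) by omega)]
          · rw [pow_one, hustep]
            norm_num
            try ring
        · obtain ⟨ihf, ihu⟩ := ih hmpos (by omega)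
          have hw2k1 : Ev ((P^m) v) (2*k - 1)
              = Ev v (2*k - 1 - m) + (2 * uv v + Ev v (2*k - m)) := by
            have hlt : 2*k - 1 < n := by omega
            rw [Ev_lt _ hlt, ihf ⟨2*k - 1, hlt⟩,
              if_neg (show ¬ (2*k - 1 + 2 ≤ m) by omega),
              if_neg (show ¬ (2*k - 1 + 1 = m) by omega),
              if_pos (show 2*k - 1 < 2*k by omega)]
          have cBw : 2 * uv ((P^m) v) + Ev ((P^m) v) (2*k - 1)
              = Ev v (2*k - 1 - m) - Ev v (2*k - m) := by
            rw [hw2k1, ihu]; ring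
          constructor
          · intro l
            rw [hpow, honeB, cBw]
            by_cases hc : l.1 = 0
            · rw [if_pos hc, if_pos (show l.1 + 2 ≤ m + 1 by omega),
                show (2*k - (m+1) : ℕ) = 2*k - 1 - m from by omega,
                show (2*k + 1 + l.1 - (m+1) : ℕ) = 2*k - m from by omega]
            · rw [if_neg hc]
              by_cases hc2 : l.1 < 2*k
              · rw [if_pos hc2]
                have hlt : l.1 - 1 < n := by omega
                rw [Ev_lt _ hlt, ihf ⟨l.1 - 1, hlt⟩]
                by_cases hc3 : l.1 - 1 + 2 ≤ m
                · rw [if_pos hc3, if_pos (show l.1 + 2 ≤ m + 1 by omega)]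
                  rw [show (2*k + 1 + l.1 - (m+1) : ℕ) = 2*k + 1 + (l.1 - 1) - m
                    from by omega,
                    show (2*k - (m+1) : ℕ) = 2*k - 1 - m from by omega]
                  ring
                · by_cases hc4 : l.1 - 1 + 1 = m
                  · rw [if_neg hc3, if_pos hc4,
                      if_neg (show ¬ (l.1 + 2 ≤ m + 1) by omega),
                      if_pos (show l.1 + 1 = m + 1 by omega),
                      show (2*k - (m+1) : ℕ) = 2*k - 1 - m from by omega]
                    ring
                  · rw [if_neg hc3, if_neg hc4,
                      if_pos (show (⟨l.1 - 1, hlt⟩ : Fin n).1 < 2*k by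
                        show l.1 - 1 < 2*k; omega),
                      if_neg (show ¬ (l.1 + 2 ≤ m + 1) by omega),
                      if_neg (show ¬ (l.1 + 1 = m + 1) by omega),
                      if_pos hc2,
                      show ((⟨l.1 - 1, hlt⟩ : Fin n).1 - m : ℕ) = l.1 - (m+1) from by
                        show (l.1 - 1 - m : ℕ) = l.1 - (m+1); omega,
                      show (2*k - (m+1) : ℕ) = 2*k - 1 - m from by omega]
                    ring
              · rw [if_neg hc2, ihf l,
                  if_neg (show ¬ (l.1 + 2 ≤ m) by omega),
                  if_neg (show ¬ (l.1 + 1 = m) by omega),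
                  if_neg hc2,
                  if_neg (show ¬ (l.1 + 2 ≤ m + 1) by omega),
                  if_neg (show ¬ (l.1 + 1 = m + 1) by omega),
                  if_neg hc2,
                  show (2*k - (m+1) : ℕ) = 2*k - 1 - m from by omega]
                ring
          · rw [hpow, hustep, hw2k1, ihu,
              show (2*k - (m+1) : ℕ) = 2*k - 1 - m from by omega]
            ring
    -- the (2k+1)-st power negates the block
    have claimF : ∀ (v : Fin n → ℤ) (l : Fin n), (P ^ (2*k+1)) v l =
        if l.1 < 2*k then -(v l) else v l + 2 * uv v := by
      intro v l
      obtain ⟨hf2k, hu2k⟩ := claimB v (2*k) (by omega) le_rfl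
      have hw2k1 : Ev ((P^(2*k)) v) (2*k - 1) = 2 * uv v + Ev v 0 := by
        have hlt : 2*k - 1 < n := by omega
        rw [Ev_lt _ hlt, hf2k ⟨2*k - 1, hlt⟩,
          if_neg (show ¬ (2*k - 1 + 2 ≤ 2*k) by omega),
          if_pos (show 2*k - 1 + 1 = 2*k by omega),
          show (2*k - 2*k : ℕ) = 0 from by omega]
      have cBw : 2 * uv ((P^(2*k)) v) + Ev ((P^(2*k)) v) (2*k - 1) = -(Ev v 0) := by
        rw [hw2k1, hu2k, show (2*k - 2*k : ℕ) = 0 from by omega]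
        ring
      rw [hpow, honeB, cBw]
      by_cases hc : l.1 = 0
      · rw [if_pos hc, if_pos (show l.1 < 2*k by omega)]
        congr 1
        rw [← hc, Ev_fin]
      · rw [if_neg hc]
        by_cases hc2 : l.1 < 2*k
        · rw [if_pos hc2, if_pos hc2]
          have hlt : l.1 - 1 < n := by omega
          rw [Ev_lt _ hlt, hf2k ⟨l.1 - 1, hlt⟩,
            if_pos (show l.1 - 1 + 2 ≤ 2*k by omega),
            show (2*k - 2*k : ℕ) = 0 from by omega,
            show (2*k + 1 + (l.1 - 1) - 2*k : ℕ) = l.1 from by omega,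
            Ev_fin]
          ring
        · rw [if_neg hc2, hf2k l,
            if_neg (show ¬ (l.1 + 2 ≤ 2*k) by omega),
            if_neg (show ¬ (l.1 + 1 = 2*k) by omega),
            if_neg hc2, if_neg hc2,
            show (2*k - 2*k : ℕ) = 0 from by omega]
          ring
    have uF : ∀ v : Fin n → ℤ, uv ((P ^ (2*k+1)) v) = -(uv v) := by
      intro v
      simp only [huv]
      rw [← Finset.sum_neg_distrib]
      refine Finset.sum_congr rfl fun t ht => ?_
      have hlt : t < n := by have := Finset.mem_range.mp ht; omega
      rw [Ev_lt _ hlt, Ev_lt _ hlt, claimF v ⟨t, hlt⟩,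
        if_pos (show t < 2*k from Finset.mem_range.mp ht)]
      ring
    rw [show 2 * (2*k+1) = (2*k+1) + (2*k+1) from by ring, pow_add, mul_apply']
    funext l
    rw [claimF ((P ^ (2*k+1)) v) l]
    by_cases hc : l.1 < 2*k
    · rw [if_pos hc, claimF v l, if_pos hc]
      ring
    · rw [if_neg hc, claimF v l, if_neg hc, uF v]
      ring
  · -- Case i ≥ 1
    obtain ⟨p, hip⟩ : ∃ p, i = p + 1 := ⟨i - 1, by omega⟩
    set sv : (Fin n → ℤ) → ℤ :=
      fun w => ∑ t ∈ Finset.range (2*k+1), (-1:ℤ)^t * Ev w (p+t) with hsv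
    have hchain : ∀ (w : Fin n → ℤ) (l : Fin n), P w l =
        if l.1 + 1 = i then
          (∑ t ∈ Finset.range (2*k), 2 * (-1:ℤ)^t * Ev w (i - 1 + t))
            + (-1:ℤ)^(2*k) * Ev w (i - 1 + 2*k)
        else if i ≤ l.1 ∧ l.1 < i + 2*k then Ev w (l.1 - 1)
        else w l := by
      intro w l
      exact chain_apply (2*k) i (by omega) (by omega) _ (fun t => rfl) w l
    have hone : ∀ (w : Fin n → ℤ) (l : Fin n), P w l =
        if l.1 = p then 2 * sv w - Ev w (p + 2*k)
        else if p + 1 ≤ l.1 ∧ l.1 ≤ p + 2*k then Ev w (l.1 - 1)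
        else w l := by
      intro w l
      rw [hchain w l]
      have h2 : (-1:ℤ)^(2*k) = 1 := by
        rw [pow_mul]; norm_num
      have h3 : ∀ t, i - 1 + t = p + t := fun t => by omega
      have hC : (∑ t ∈ Finset.range (2*k), 2 * (-1:ℤ)^t * Ev w (i - 1 + t))
          + (-1:ℤ)^(2*k) * Ev w (i - 1 + 2*k) = 2 * sv w - Ev w (p + 2*k) := by
        have h1 : sv w = (∑ t ∈ Finset.range (2*k), (-1:ℤ)^t * Ev w (p+t))
            + (-1:ℤ)^(2*k) * Ev w (p + 2*k) := Finset.sum_range_succ _ _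
        simp only [h3]
        rw [h2] at h1 ⊢
        rw [show (∑ t ∈ Finset.range (2*k), 2 * (-1:ℤ)^t * Ev w (p + t))
            = 2 * ∑ t ∈ Finset.range (2*k), (-1:ℤ)^t * Ev w (p+t) from by
          rw [Finset.mul_sum]; exact Finset.sum_congr rfl fun t _ => by ring]
        rw [h1]; ring
      rw [hC]
      by_cases hc : l.1 = p
      · rw [if_pos (by omega : l.1 + 1 = i), if_pos hc]
      · rw [if_neg (by omega : ¬ (l.1 + 1 = i)), if_neg hc]
        by_cases hc2 : i ≤ l.1 ∧ l.1 < i + 2*k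
        · rw [if_pos hc2, if_pos (by omega)]
        · rw [if_neg hc2, if_neg (by omega)]
    have hsstep : ∀ w, sv (P w) = sv w := by
      intro w
      have hd : ∀ t, t < 2*k → Ev (P w) (p + (t+1)) = Ev w (p + t) := by
        intro t ht
        have hlt : p + (t+1) < n := by omega
        rw [Ev_lt _ hlt, hone]
        rw [if_neg (show ¬ (p + (t+1) = p) by omega),
          if_pos (show p + 1 ≤ p + (t+1) ∧ p + (t+1) ≤ p + 2*k by omega)]
        show Ev w (p + (t+1) - 1) = Ev w (p + t)
        congr 1
      have e0 : Ev (P w) (p + 0) = 2 * sv w - Ev w (p + 2*k) := by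
        have hlt : p + 0 < n := by omega
        rw [Ev_lt _ hlt, hone, if_pos (show p + 0 = p from rfl)]
      have hsw : sv w = (∑ t ∈ Finset.range (2*k), (-1:ℤ)^t * Ev w (p+t))
          + (-1:ℤ)^(2*k) * Ev w (p + 2*k) := Finset.sum_range_succ _ _
      have h2 : (-1:ℤ)^(2*k) = 1 := by rw [pow_mul]; norm_num
      calc sv (P w)
          = (∑ t ∈ Finset.range (2*k), (-1:ℤ)^(t+1) * Ev (P w) (p+(t+1)))
            + (-1:ℤ)^0 * Ev (P w) (p+0) := Finset.sum_range_succ' _ _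
        _ = (∑ t ∈ Finset.range (2*k), -((-1:ℤ)^t * Ev w (p+t)))
            + (2 * sv w - Ev w (p + 2*k)) := by
            rw [e0, pow_zero, one_mul]
            congr 1
            refine Finset.sum_congr rfl fun t ht => ?_
            rw [hd t (Finset.mem_range.mp ht)]
            ring
        _ = sv w := by
            rw [Finset.sum_neg_distrib]
            rw [h2] at hsw
            rw [show (∑ t ∈ Finset.range (2*k), (-1:ℤ)^t * Ev w (p+t))
              = sv w - Ev w (p + 2*k) from by rw [hsw]; ring]
            ring
    have hspow : ∀ (v : Fin n → ℤ) (m : ℕ), sv ((P^m) v) = sv v := by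
      intro v m
      induction m with
      | zero => rw [pow_zero, one_apply']
      | succ m ih => rw [hpow, hsstep, ih]
    have claimA : ∀ (v : Fin n → ℤ) (m : ℕ), m ≤ 2*k+1 → ∀ l : Fin n,
        (P ^ m) v l =
          if p ≤ l.1 ∧ l.1 ≤ p + 2*k then
            (if p + m ≤ l.1 then Ev v (l.1 - m)
             else 2 * sv v - Ev v (l.1 + (2*k+1) - m))
          else v l := by
      intro v m
      induction m with
      | zero =>
        intro _ l
        rw [pow_zero, one_apply']
        by_cases hb : p ≤ l.1 ∧ l.1 ≤ p + 2*k
        · rw [if_pos hb, if_pos (by omega), show l.1 - 0 = l.1 from rfl, Ev_fin]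
        · rw [if_neg hb]
      | succ m ih =>
        intro hm l
        have hm' : m ≤ 2*k+1 := by omega
        rw [hpow, hone]
        by_cases hc : l.1 = p
        · rw [if_pos hc]
          have hlt : p + 2*k < n := by omega
          have h2k : Ev ((P^m) v) (p + 2*k) = Ev v (p + 2*k - m) := by
            rw [Ev_lt _ hlt, ih hm' ⟨p + 2*k, hlt⟩,
              if_pos (show p ≤ p + 2*k ∧ p + 2*k ≤ p + 2*k by omega),
              if_pos (show p + m ≤ p + 2*k by omega)]
          rw [h2k, hspow, if_pos (show p ≤ l.1 ∧ l.1 ≤ p + 2*k by omega),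
            if_neg (show ¬ (p + (m+1) ≤ l.1) by omega)]
          congr 2
          omega
        · rw [if_neg hc]
          by_cases hc2 : p + 1 ≤ l.1 ∧ l.1 ≤ p + 2*k
          · rw [if_pos hc2]
            have hlt : l.1 - 1 < n := by omega
            rw [Ev_lt _ hlt, ih hm' ⟨l.1 - 1, hlt⟩,
              if_pos (show p ≤ l.1 - 1 ∧ l.1 - 1 ≤ p + 2*k by constructor <;> omega)]
            by_cases hc3 : p + m ≤ l.1 - 1
            · rw [if_pos hc3, if_pos (show p ≤ l.1 ∧ l.1 ≤ p + 2*k by omega),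
                if_pos (show p + (m+1) ≤ l.1 by omega)]
              show Ev v (l.1 - 1 - m) = Ev v (l.1 - (m+1))
              congr 1; omega
            · rw [if_neg hc3, if_pos (show p ≤ l.1 ∧ l.1 ≤ p + 2*k by omega),
                if_neg (show ¬ (p + (m+1) ≤ l.1) by omega)]
              show 2 * sv v - Ev v (l.1 - 1 + (2*k+1) - m)
                  = 2 * sv v - Ev v (l.1 + (2*k+1) - (m+1))
              congr 2; omega
          · rw [if_neg hc2, ih hm' l, if_neg (show ¬ (p ≤ l.1 ∧ l.1 ≤ p + 2*k) by omega),
              if_neg (show ¬ (p ≤ l.1 ∧ l.1 ≤ p + 2*k) by omega)]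
    rw [show 2 * (2*k+1) = (2*k+1) + (2*k+1) from by ring, pow_add, mul_apply']
    set w := (P ^ (2*k+1)) v with hwdef
    have hwl : ∀ l : Fin n, w l = if p ≤ l.1 ∧ l.1 ≤ p + 2*k then 2 * sv v - v l
        else v l := by
      intro l
      rw [hwdef, claimA v (2*k+1) le_rfl l]
      by_cases hb : p ≤ l.1 ∧ l.1 ≤ p + 2*k
      · rw [if_pos hb, if_pos hb, if_neg (by omega),
          show l.1 + (2*k+1) - (2*k+1) = l.1 by omega, Ev_fin]
      · rw [if_neg hb, if_neg hb]
    funext l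
    rw [claimA w (2*k+1) le_rfl l]
    have hsw : sv w = sv v := by rw [hwdef, hspow]
    by_cases hb : p ≤ l.1 ∧ l.1 ≤ p + 2*k
    · rw [if_pos hb, if_neg (by omega), hsw,
        show l.1 + (2*k+1) - (2*k+1) = l.1 by omega, Ev_fin, hwl l, if_pos hb]
      ring
    · rw [if_neg hb, hwl l, if_neg hb]
end

section
/- Let n ≥ 2 and let r : GL(n, ℤ) → GL(n, ℤ/2ℤ) denote entrywise reduction modulo 2. Then the image r(𝒢_n) of the group 𝒢_n under this reduction is isomorphic to the symmetric group S_{n+1} on n+1 letters; specifically, r(𝒢_n) equals { M(π) : π a permutation of {0,1,…,n} }, where M(π)_{ij} = δ_{i,π(j)} + δ_{0,π(j)} over ℤ/2ℤ, and r(S_i) = M(τ_i) with τ_i the transposition exchanging i−1 and i. -/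
/-- The matrix `M(π)` over `ℤ/2ℤ` attached to a permutation `π` of `{0,1,…,n}`,
with rows and columns indexed by `{1,…,n}` (realized as `Fin n` via `Fin.succ`):
`M(π)_{ij} = δ_{i,π(j)} + δ_{0,π(j)}`. -/
def Mperm (n : ℕ) (π : Equiv.Perm (Fin (n + 1))) : Matrix (Fin n) (Fin n) (ZMod 2) :=
  Matrix.of fun i j =>
    (if (i.succ : Fin (n + 1)) = π j.succ then 1 else 0) +
    (if (0 : Fin (n + 1)) = π j.succ then 1 else 0)


theorem zmodtwo : (2 : ZMod 2) = 0 := by decide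

theorem Mperm_one (n : ℕ) : Mperm n 1 = 1 := by
  ext i j
  simp only [Mperm, Matrix.of_apply, Equiv.Perm.one_apply, Matrix.one_apply, Fin.succ_inj]
  have h0 : ¬(0 : Fin (n + 1)) = j.succ := by simp [Fin.ext_iff]
  simp [h0]

theorem sum_ind {n : ℕ} (π : Equiv.Perm (Fin (n + 1))) (a : Fin (n + 1)) :
    ∑ k : Fin n, (if a = π k.succ then (1 : ZMod 2) else 0) =
      (if a = π 0 then 1 else 0) + 1 := by
  have htot : ∑ b : Fin (n + 1), (if a = π b then (1 : ZMod 2) else 0) = 1 := by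
    rw [Finset.sum_eq_single (π.symm a)]
    · simp
    · intro b _ hb
      rw [if_neg]
      intro hc
      exact hb (by rw [hc]; simp)
    · simp
  rw [Fin.sum_univ_succ] at htot
  linear_combination htot - (if a = π 0 then (1 : ZMod 2) else 0) * zmodtwo

theorem Mperm_mul (n : ℕ) (π σ : Equiv.Perm (Fin (n + 1))) :
    Mperm n (π * σ) = Mperm n π * Mperm n σ := by
  ext i j
  rw [Matrix.mul_apply]
  simp only [Mperm, Matrix.of_apply, Equiv.Perm.mul_apply]
  rcases Fin.eq_zero_or_eq_succ (σ j.succ) with h | ⟨t, h⟩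
  · have hterm : ∀ k : Fin n,
        ((if (i.succ : Fin (n+1)) = π k.succ then (1:ZMod 2) else 0) +
            if (0 : Fin (n+1)) = π k.succ then 1 else 0) *
          ((if (k.succ : Fin (n+1)) = σ j.succ then 1 else 0) +
            if (0 : Fin (n+1)) = σ j.succ then 1 else 0) =
        (if (i.succ : Fin (n+1)) = π k.succ then (1:ZMod 2) else 0) +
          if (0 : Fin (n+1)) = π k.succ then 1 else 0 := by
      intro k
      rw [h, if_neg (Fin.succ_ne_zero k), if_pos rfl, zero_add, mul_one]
    rw [Finset.sum_congr rfl fun k _ => hterm k, Finset.sum_add_distrib,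
      sum_ind π i.succ, sum_ind π 0]
    simp only [h]
    linear_combination -zmodtwo
  · have hterm : ∀ k : Fin n,
        ((if (i.succ : Fin (n+1)) = π k.succ then (1:ZMod 2) else 0) +
            if (0 : Fin (n+1)) = π k.succ then 1 else 0) *
          ((if (k.succ : Fin (n+1)) = σ j.succ then 1 else 0) +
            if (0 : Fin (n+1)) = σ j.succ then 1 else 0) =
        if k = t then ((if (i.succ : Fin (n+1)) = π t.succ then (1:ZMod 2) else 0) +
          if (0 : Fin (n+1)) = π t.succ then 1 else 0) else 0 := by
      intro k
      rw [h]
      by_cases hk : k = t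
      · subst hk
        simp [(Fin.succ_ne_zero k).symm]
      · have h2 : ¬(k.succ : Fin (n+1)) = t.succ := by simpa [Fin.succ_inj] using hk
        simp [h2, hk, (Fin.succ_ne_zero t).symm]
    rw [Finset.sum_congr rfl fun k _ => hterm k, Finset.sum_ite_eq' Finset.univ t]
    simp only [h]
    simp

/-- `Mperm` bundled as a monoid hom. -/
def MpermHom (n : ℕ) : Equiv.Perm (Fin (n + 1)) →* Matrix (Fin n) (Fin n) (ZMod 2) where
  toFun := Mperm n
  map_one' := Mperm_one n
  map_mul' := Mperm_mul n

/-- Reduction mod 2 as a monoid hom on the automorphism group of `ℤ^n`. -/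
def redHom (n : ℕ) : ((Fin n → ℤ) ≃ₗ[ℤ] (Fin n → ℤ)) →* Matrix (Fin n) (Fin n) (ZMod 2) where
  toFun T := (LinearMap.toMatrix' T.toLinearMap).map (Int.cast : ℤ → ZMod 2)
  map_one' := by
    rw [LinearEquiv.coe_toLinearMap_one, LinearMap.toMatrix'_id]
    exact Matrix.map_one _ (by simp) (by simp)
  map_mul' x y := by
    rw [LinearEquiv.coe_toLinearMap_mul, LinearMap.toMatrix'_mul]
    exact Matrix.map_mul (f := Int.castRingHom (ZMod 2))

theorem gen_red (n : ℕ) (i : Fin n) :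
    (LinearMap.toMatrix' (Sgen n i).toLinearMap).map (Int.cast : ℤ → ZMod 2) =
      Mperm n (Equiv.swap i.castSucc i.succ) := by
  ext a b
  rw [Matrix.map_apply, LinearMap.toMatrix'_apply]
  show ((SFun n i (Pi.single b 1)) a : ZMod 2) = _
  rw [show (Pi.single b (1:ℤ) : Fin n → ℤ) = fun j' => if j' = b then 1 else 0 from
    funext fun j' => Pi.single_apply b 1 j']
  simp only [Mperm, Matrix.of_apply, Equiv.swap_apply_def, SFun, ipred]
  simp only [Fin.ext_iff, Fin.val_succ, Fin.coe_castSucc, Fin.val_zero]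
  split_ifs <;>
    simp only [Fin.coe_castSucc, Fin.val_succ, Fin.val_zero] at * <;>
    first | rfl | omega | decide

/-- The image of `𝒢_n` under entrywise reduction modulo `2` equals
`{M(π) : π ∈ S_{n+1}}` (hence is isomorphic to `S_{n+1}`), and the generator `S_i`
reduces to `M(τ_i)` with `τ_i` the transposition exchanging `i − 1` and `i`. -/
theorem Gn_mod_two (n : ℕ) (hn : 2 ≤ n) :
    (∀ i : Fin n,
        (LinearMap.toMatrix' (Sgen n i).toLinearMap).map (Int.cast : ℤ → ZMod 2) =
          Mperm n (Equiv.swap i.castSucc i.succ)) ∧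
    (fun T : (Fin n → ℤ) ≃ₗ[ℤ] (Fin n → ℤ) =>
        (LinearMap.toMatrix' T.toLinearMap).map (Int.cast : ℤ → ZMod 2)) '' ↑(Gn n) =
      Set.range (Mperm n) := by
  refine ⟨gen_red n, ?_⟩
  have hred : (fun T : (Fin n → ℤ) ≃ₗ[ℤ] (Fin n → ℤ) =>
      (LinearMap.toMatrix' T.toLinearMap).map (Int.cast : ℤ → ZMod 2)) = ⇑(redHom n) := rfl
  rw [hred]
  apply Set.eq_of_subset_of_subset
  · rintro _ ⟨T, hT, rfl⟩
    refine Subgroup.closure_induction (p := fun x _ => redHom n x ∈ Set.range (Mperm n))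
      ?_ ?_ ?_ ?_ hT
    · rintro _ ⟨i, rfl⟩
      refine ⟨Equiv.swap i.castSucc i.succ, ?_⟩
      exact (gen_red n i).symm
    · exact ⟨1, by rw [Mperm_one, map_one]⟩
    · rintro x y _ _ ⟨π, hπ⟩ ⟨σ, hσ⟩
      exact ⟨π * σ, by rw [Mperm_mul, hπ, hσ, map_mul]⟩
    · rintro x _ ⟨π, hπ⟩
      refine ⟨π⁻¹, ?_⟩
      have h1 : redHom n x⁻¹ * redHom n x = 1 := by
        rw [← map_mul, inv_mul_cancel, map_one]
      rw [← hπ] at h1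
      have h2 : Mperm n π * Mperm n π⁻¹ = 1 := by
        rw [← Mperm_mul, mul_inv_cancel, Mperm_one]
      calc Mperm n π⁻¹ = 1 * Mperm n π⁻¹ := (one_mul _).symm
        _ = redHom n x⁻¹ * Mperm n π * Mperm n π⁻¹ := by rw [h1]
        _ = redHom n x⁻¹ * (Mperm n π * Mperm n π⁻¹) := by rw [mul_assoc]
        _ = redHom n x⁻¹ := by rw [h2, mul_one]
  · rintro _ ⟨π, rfl⟩
    have hmem : ∀ σ : Equiv.Perm (Fin (n + 1)),
        MpermHom n σ ∈ (Submonoid.map (redHom n) (Gn n).toSubmonoid) := by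
      intro σ
      have hσ : σ ∈ Submonoid.closure
          (Set.range fun i : Fin n => Equiv.swap i.castSucc i.succ) := by
        rw [Equiv.Perm.mclosure_swap_castSucc_succ]
        trivial
      have hle : Submonoid.closure (Set.range fun i : Fin n => Equiv.swap i.castSucc i.succ) ≤
          (Submonoid.map (redHom n) (Gn n).toSubmonoid).comap (MpermHom n) := by
        rw [Submonoid.closure_le]
        rintro _ ⟨i, rfl⟩
        refine Submonoid.mem_comap.mpr ?_
        refine ⟨Sgen n i, Subgroup.subset_closure ⟨i, rfl⟩, ?_⟩
        exact gen_red n i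
      exact hle hσ
    obtain ⟨T, hT, hEq⟩ := hmem π
    exact ⟨T, hT, hEq⟩
end
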